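/- arXiv:2207.11870 — 4 statements merged into one kernel-verified Lean document; each statement's English description precedes it below -/
import Mathlib

section
/- For horizontal almost ι_K-complexes A, B, C, the two involutions ι_{A⊗(B⊗C)} and ι_{(A⊗B)⊗C} on the U=0 truncation of A ⊗_{F₂[U]} B ⊗_{F₂[U]} C, obtained by iterating the tensor-product construction in the two possible ways, are chain homotopic; hence the tensor operation on almost ι_K-local equivalence classes is associative. -/
/-!
Algebraic model for horizontal almost `ι_K`-complexes (Kang–Park,
"Torsion in the knot concordance group and cabling").

Conventions.  We work over `F₂ = ℤ/2`.  A bigraded chain complex of finitely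
generated free `F₂[U]`-modules is presented by a finite homogeneous basis
`idx`, a bidegree function `gr : idx → ℤ × ℤ` (Alexander and Maslov gradings),
and a differential matrix `d` over `F₂[U]` (the `j`-th basis vector is sent to
`∑ i, d i j • eᵢ`; matrix multiplication is composition).  The variable `U`
has bidegree `(−1, −2)` and the differential has bidegree `(0, −1)`.
-/

open Polynomial Matrix Kronecker

noncomputable section

/-- The field with two elements. -/
abbrev F2 : Type := ZMod 2

/-- The ring `F₂[U]`. -/
abbrev PolyU : Type := Polynomial F2

/-- The ring `F₂[U, U⁻¹]`. -/
abbrev Laur : Type := LaurentPolynomial F2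

/-- The localization map `F₂[U] → F₂[U, U⁻¹]`. -/
def toL : PolyU →+* Laur := Polynomial.toLaurent

/-- The skew of a bidegree: `(A, M) ↦ (−A, M)`. -/
def skew (p : ℤ × ℤ) : ℤ × ℤ := (-p.1, p.2)

/-- Data of a bigraded complex of finitely generated free `F₂[U]`-modules. -/
structure CxData where
  idx : Type
  [fintype_idx : Fintype idx]
  [dec_idx : DecidableEq idx]
  gr : idx → ℤ × ℤ
  d : Matrix idx idx PolyU

attribute [instance] CxData.fintype_idx CxData.dec_idx

/-- The `U = 0` (hat-flavored) truncation of a matrix over `F₂[U]`. -/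
def hatM {m n : Type} (f : Matrix m n PolyU) : Matrix m n F2 :=
  fun i j => (f i j).coeff 0

/-- `f` is a homogeneous `F₂[U]`-linear map of bidegree `δ` from `C` to `D`:
a monomial `U^k` appearing in the entry `(i, j)` forces
`gr i + k • (−1, −2) = gr j + δ`. -/
def GradedMap (C D : CxData) (δ : ℤ × ℤ) (f : Matrix D.idx C.idx PolyU) : Prop :=
  ∀ (i : D.idx) (j : C.idx) (k : ℕ), (f i j).coeff k ≠ 0 →
    D.gr i + (-(k : ℤ), -2 * (k : ℤ)) = C.gr j + δ

/-- An element (column vector) of `C` is homogeneous of bidegree `δ`. -/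
def Homog (C : CxData) (δ : ℤ × ℤ) (v : Matrix C.idx Unit PolyU) : Prop :=
  ∀ (i : C.idx) (k : ℕ), (v i ()).coeff k ≠ 0 →
    C.gr i + (-(k : ℤ), -2 * (k : ℤ)) = δ

namespace CxData

/-- `C` is a bigraded chain complex: `∂² = 0` and `∂` has bidegree `(0, −1)`. -/
def IsComplex (C : CxData) : Prop :=
  C.d * C.d = 0 ∧ GradedMap C C (0, -1) C.d

/-- The formal derivative `Φ` of the differential with respect to `U`. -/
def Phi (C : CxData) : Matrix C.idx C.idx PolyU :=
  fun i j => derivative (C.d i j)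

/-- The induced differential on the truncation `Ĉ = C/UC`. -/
def dHat (C : CxData) : Matrix C.idx C.idx F2 := hatM C.d

/-- The truncation of `Φ` to `Ĉ`. -/
def PhiHat (C : CxData) : Matrix C.idx C.idx F2 := hatM C.Phi

/-- The localized differential, over `F₂[U, U⁻¹]`. -/
def dL (C : CxData) : Matrix C.idx C.idx Laur := C.d.map toL

end CxData

/-- Chain homotopy (everything is mod 2) between maps `Ĉ → D̂` of truncations. -/
def HatHomotopic (C D : CxData) (f g : Matrix D.idx C.idx F2) : Prop :=
  ∃ H : Matrix D.idx C.idx F2, f + g = D.dHat * H + H * C.dHat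

/-- Chain homotopy between maps `C → D` over `F₂[U]`. -/
def Homotopic (C D : CxData) (f g : Matrix D.idx C.idx PolyU) : Prop :=
  ∃ H : Matrix D.idx C.idx PolyU, f + g = D.d * H + H * C.d

/-- Chain homotopy between maps `U⁻¹C → U⁻¹D` over `F₂[U, U⁻¹]`. -/
def LHomotopic (C D : CxData) (f g : Matrix D.idx C.idx Laur) : Prop :=
  ∃ H : Matrix D.idx C.idx Laur, f + g = D.dL * H + H * C.dL

/-- A matrix on the truncation `Ĉ` is skew-graded: each nonzero entry takes
bidegree `(A, M)` to `(−A, M)`. -/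
def SkewGraded (C : CxData) (f : Matrix C.idx C.idx F2) : Prop :=
  ∀ i j, f i j ≠ 0 → C.gr i = skew (C.gr j)

/-- `f` is a chain homotopy equivalence of the truncation `Ĉ`. -/
def HatHomotopyEquiv (C : CxData) (f : Matrix C.idx C.idx F2) : Prop :=
  f * C.dHat = C.dHat * f ∧
  ∃ g : Matrix C.idx C.idx F2, g * C.dHat = C.dHat * g ∧
    HatHomotopic C C (g * f) 1 ∧ HatHomotopic C C (f * g) 1

/-- The localization `U⁻¹C` is chain homotopy equivalent to `F₂[U, U⁻¹]`
(one generator, zero differential). -/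
def LocalizationTrivial (C : CxData) : Prop :=
  ∃ (f : Matrix Unit C.idx Laur) (g : Matrix C.idx Unit Laur),
    f * C.dL = 0 ∧ C.dL * g = 0 ∧ f * g = 1 ∧
    ∃ H : Matrix C.idx C.idx Laur, 1 + g * f = C.dL * H + H * C.dL

/-- The homology class of the cycle `x` generates the homology of `U⁻¹C`:
the chain map `F₂[U,U⁻¹] → U⁻¹C` sending the generator to `x` is a chain
homotopy equivalence. -/
def GeneratesLocalHomology (C : CxData) (x : Matrix C.idx Unit PolyU) : Prop :=
  C.dL * x.map toL = 0 ∧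
  ∃ p : Matrix Unit C.idx Laur, p * C.dL = 0 ∧ p * x.map toL = 1 ∧
    ∃ H : Matrix C.idx C.idx Laur, 1 + x.map toL * p = C.dL * H + H * C.dL

/-- A pair as in Definition 2.4: a complex together with an involution of the
hat-flavored truncation. -/
structure Hor where
  C : CxData
  iota : Matrix C.idx C.idx F2

/-- `(C, ι)` is a horizontal almost `ι_K`-complex. -/
def IsHorizontal (X : Hor) : Prop :=
  X.C.IsComplex ∧
  LocalizationTrivial X.C ∧
  HatHomotopyEquiv X.C X.iota ∧
  SkewGraded X.C X.iota ∧
  HatHomotopic X.C X.C (X.C.PhiHat * X.iota * X.C.PhiHat * X.iota)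
    (X.iota * X.C.PhiHat * X.iota * X.C.PhiHat) ∧
  HatHomotopic X.C X.C (X.iota * X.iota)
    (1 + X.C.PhiHat * X.iota * X.C.PhiHat * X.iota) ∧
  ∃ f : Matrix X.C.idx X.C.idx PolyU, f * X.C.d = X.C.d * f ∧
    HatHomotopic X.C X.C (hatM f) (X.iota * X.C.PhiHat * X.iota)

/-- The localization `U⁻¹f` of `f` is a chain homotopy equivalence. -/
def LocalizedHomotopyEquiv (C D : CxData) (f : Matrix D.idx C.idx PolyU) : Prop :=
  ∃ g : Matrix C.idx D.idx Laur,
    g * D.dL = C.dL * g ∧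
    LHomotopic C C (g * f.map toL) 1 ∧
    LHomotopic D D (f.map toL * g) 1

/-- An almost `ι_K`-local map from `(C, ι_C)` to `(D, ι_D)`: a bidegree
preserving `F₂[U]`-linear chain map whose localization is a chain homotopy
equivalence and whose truncation homotopy-commutes with the involutions. -/
def AlmostLocalMap (X Y : Hor) (f : Matrix Y.C.idx X.C.idx PolyU) : Prop :=
  GradedMap X.C Y.C (0, 0) f ∧
  f * X.C.d = Y.C.d * f ∧
  LocalizedHomotopyEquiv X.C Y.C f ∧
  HatHomotopic X.C Y.C (Y.iota * hatM f) (hatM f * X.iota)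

/-- `X ≤ Y`: there is an almost `ι_K`-local map from `X` to `Y`. -/
def Le (X Y : Hor) : Prop := ∃ f, AlmostLocalMap X Y f

/-- Almost `ι_K`-local equivalence. -/
def AlmostLocalEquiv (X Y : Hor) : Prop := Le X Y ∧ Le Y X

/-- The tensor product over `F₂[U]` of two complexes. -/
def tensorCx (C D : CxData) : CxData where
  idx := C.idx × D.idx
  gr := fun p => C.gr p.1 + D.gr p.2
  d := C.d ⊗ₖ (1 : Matrix D.idx D.idx PolyU) + (1 : Matrix C.idx C.idx PolyU) ⊗ₖ D.d

/-- The tensor product of pairs, with `ι_{C⊗D} = ι_C ⊗ ι_D + Φι_C ⊗ ι_D Φ`. -/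
def tensorHor (X Y : Hor) : Hor where
  C := tensorCx X.C Y.C
  iota := X.iota ⊗ₖ Y.iota + (X.C.PhiHat * X.iota) ⊗ₖ (Y.iota * Y.C.PhiHat)

/-- The trivial complex `C_O = F₂[U]`, generator in bidegree `(0,0)`, zero
differential, identity involution. -/
def CO : Hor where
  C := { idx := Unit, gr := fun _ => (0, 0), d := 0 }
  iota := 1

/-- The complex `C_E` of the figure-eight knot: generators `a, b, c, d, x`
(indices `0, 1, 2, 3, 4`), with `a, x` in bidegree `(0,0)`, differential
`∂a = Ub`, `∂c = Ud`, `∂b = ∂d = ∂x = 0`, and involution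
`ι(a) = a + x`, `ι(b) = c`, `ι(c) = b`, `ι(d) = d`, `ι(x) = x + d`. -/
def CE : Hor where
  C := { idx := Fin 5
         gr := ![(0, 0), (1, 1), (-1, 1), (0, 2), (0, 0)]
         d := !![0, 0, 0, 0, 0;
                 Polynomial.X, 0, 0, 0, 0;
                 0, 0, 0, 0, 0;
                 0, 0, Polynomial.X, 0, 0;
                 0, 0, 0, 0, 0] }
  iota := !![1, 0, 0, 0, 0;
             0, 0, 1, 0, 0;
             0, 1, 0, 0, 0;
             0, 0, 0, 1, 1;
             1, 0, 0, 0, 1]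

/-- The complex `C_n`: generators `a_n, b_n, c_n, d_n, x_n` (indices
`0, …, 4`), `a_n, x_n` in bidegree `(0,0)`, differential `∂a_n = Uⁿ b_n`,
`∂c_n = Uⁿ d_n`, and involution `ι(a_n) = a_n + x_n`, `ι(b_n) = c_n`,
`ι(c_n) = b_n`, `ι(d_n) = d_n`, `ι(x_n) = x_n`. -/
def Cn (n : ℕ) : Hor where
  C := { idx := Fin 5
         gr := ![(0, 0), ((n : ℤ), 2 * (n : ℤ) - 1), (-(n : ℤ), 2 * (n : ℤ) - 1),
                 (0, 4 * (n : ℤ) - 2), (0, 0)]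
         d := !![0, 0, 0, 0, 0;
                 Polynomial.X ^ n, 0, 0, 0, 0;
                 0, 0, 0, 0, 0;
                 0, 0, Polynomial.X ^ n, 0, 0;
                 0, 0, 0, 0, 0] }
  iota := !![1, 0, 0, 0, 0;
             0, 0, 1, 0, 0;
             0, 1, 0, 0, 0;
             0, 0, 0, 1, 0;
             1, 0, 0, 0, 1]

/-- The dual complex `C* = Hom_{F₂[U]}(C, F₂[U])`: dual basis, negated
gradings, transposed differential. -/
def dualCx (C : CxData) : CxData where
  idx := C.idx
  gr := fun i => -C.gr i
  d := C.dᵀ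

/-- The dual pair `(C*, ι*)`. -/
def dualHor (X : Hor) : Hor where
  C := dualCx X.C
  iota := X.iotaᵀ

/-- `n`-fold tensor power (`0` gives the trivial complex `C_O`). -/
def tensorPow (X : Hor) : ℕ → Hor
  | 0 => CO
  | n + 1 => tensorHor (tensorPow X n) X

/-- The trace map `tr : C ⊗ C* → F₂[U]`. -/
def trMap (C : CxData) : Matrix Unit (C.idx × C.idx) PolyU :=
  fun _ p => if p.1 = p.2 then 1 else 0

/-- The cotrace map `cotr : F₂[U] → C ⊗ C*`. -/
def cotrMap (C : CxData) : Matrix (C.idx × C.idx) Unit PolyU :=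
  fun p _ => if p.1 = p.2 then 1 else 0




section Helpers
variable {R : Type*} [AddCommMonoid R] [Module F2 R]

lemma addself (a : R) : a + a = 0 := by
  have h : (2 : F2) • a = 0 := by
    have : (2 : F2) = 0 := by decide
    rw [this, zero_smul]
  rw [two_smul] at h; exact h

lemma eq_of_add_eq_zero' {a b : R} (h : a + b = 0) : a = b := by
  have h2 : a + (b + b) = (a + b) + b := (add_assoc _ _ _).symm
  rw [addself, h, add_zero, zero_add] at h2; exact h2

end Helpers

lemma Phi_tensor (C D : CxData) :
    (tensorCx C D).Phi = C.Phi ⊗ₖ (1 : Matrix D.idx D.idx PolyU)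
      + (1 : Matrix C.idx C.idx PolyU) ⊗ₖ D.Phi := by
  ext ⟨i, j⟩ ⟨k, l⟩
  simp only [tensorCx, CxData.Phi, Matrix.add_apply, kroneckerMap_apply, Matrix.one_apply]
  rw [derivative_add]
  congr 1 <;> split_ifs <;> simp

lemma phi_comm {C : CxData} (h : C.d * C.d = 0) : C.Phi * C.d = C.d * C.Phi := by
  apply eq_of_add_eq_zero'
  funext i j
  have h0 : derivative ((C.d * C.d) i j) = 0 := by rw [h]; simp
  rw [Matrix.mul_apply, map_sum] at h0
  simp only [derivative_mul] at h0
  rw [Finset.sum_add_distrib] at h0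
  show (C.Phi * C.d) i j + (C.d * C.Phi) i j = (0 : Matrix C.idx C.idx PolyU) i j
  simpa [Matrix.add_apply, Matrix.mul_apply, CxData.Phi] using h0

/-- second Hasse derivative of the differential -/
def HD2 (C : CxData) : Matrix C.idx C.idx PolyU := fun i j => hasseDeriv 2 (C.d i j)

lemma phi_sq {C : CxData} (h : C.d * C.d = 0) :
    C.Phi * C.Phi = C.d * HD2 C + HD2 C * C.d := by
  apply eq_of_add_eq_zero'
  funext i j
  have h0 : hasseDeriv 2 ((C.d * C.d) i j) = 0 := by rw [h]; simp
  rw [Matrix.mul_apply, map_sum] at h0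
  simp only [Polynomial.hasseDeriv_mul,
    Finset.Nat.sum_antidiagonal_eq_sum_range_succ_mk, Finset.sum_range_succ,
    Finset.sum_range_zero, zero_add] at h0
  norm_num [Polynomial.hasseDeriv_zero', Polynomial.hasseDeriv_one'] at h0
  rw [Finset.sum_add_distrib, Finset.sum_add_distrib] at h0
  show (C.Phi * C.Phi) i j + (C.d * HD2 C + HD2 C * C.d) i j = (0 : Matrix C.idx C.idx PolyU) i j
  simp only [Matrix.add_apply, Matrix.mul_apply, CxData.Phi, HD2, Matrix.zero_apply]
  rw [← h0]
  ring

lemma hatM_add' {m n : Type} (f g : Matrix m n PolyU) :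
    hatM (f + g) = hatM f + hatM g := by
  funext i j; simp [hatM]

lemma hatM_mul' {l m n : Type} [Fintype m] (f : Matrix l m PolyU) (g : Matrix m n PolyU) :
    hatM (f * g) = hatM f * hatM g := by
  funext i j
  simp [hatM, Matrix.mul_apply, Polynomial.finset_sum_coeff, Polynomial.mul_coeff_zero]

lemma hatM_one' {n : Type} [DecidableEq n] : hatM (1 : Matrix n n PolyU) = 1 := by
  funext i j
  simp only [hatM, Matrix.one_apply]
  split_ifs <;> simp

lemma hatM_kron {l m n p : Type} (A : Matrix l m PolyU) (B : Matrix n p PolyU) :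
    hatM (A ⊗ₖ B) = hatM A ⊗ₖ hatM B := by
  funext x y
  obtain ⟨i, j⟩ := x; obtain ⟨k, l⟩ := y
  simp [hatM, Polynomial.mul_coeff_zero]

lemma hatM_submatrix {m n m' n' : Type} (M : Matrix m n PolyU) (f : m' → m) (g : n' → n) :
    hatM (M.submatrix f g) = (hatM M).submatrix f g := rfl

lemma dHat_tensor (C D : CxData) :
    (tensorCx C D).dHat = C.dHat ⊗ₖ (1 : Matrix D.idx D.idx F2)
      + (1 : Matrix C.idx C.idx F2) ⊗ₖ D.dHat := by
  show hatM ((tensorCx C D).d) = _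
  show hatM (C.d ⊗ₖ (1 : Matrix D.idx D.idx PolyU) + (1 : Matrix C.idx C.idx PolyU) ⊗ₖ D.d) = _
  rw [hatM_add', hatM_kron, hatM_kron, hatM_one', hatM_one']
  unfold CxData.dHat
  rfl

lemma PhiHat_tensor (C D : CxData) :
    (tensorCx C D).PhiHat = C.PhiHat ⊗ₖ (1 : Matrix D.idx D.idx F2)
      + (1 : Matrix C.idx C.idx F2) ⊗ₖ D.PhiHat := by
  show hatM ((tensorCx C D).Phi) = _
  rw [Phi_tensor]; show hatM (C.Phi ⊗ₖ (1 : Matrix D.idx D.idx PolyU) + (1 : Matrix C.idx C.idx PolyU) ⊗ₖ D.Phi) = _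
  rw [hatM_add', hatM_kron, hatM_kron, hatM_one', hatM_one']
  unfold CxData.PhiHat
  rfl

section Pl
variable {R : Type*} [Semiring R] {m n p : Type}

/-- permutation matrix of an equiv -/
def Pl [DecidableEq n] (e : m ≃ n) : Matrix m n R := (1 : Matrix n n R).submatrix e id

lemma Pl_apply [DecidableEq n] (e : m ≃ n) (i : m) (j : n) :
    (Pl e : Matrix m n R) i j = if e i = j then 1 else 0 := by
  simp [Pl, Matrix.one_apply]

lemma Pl_mul [DecidableEq n] [Fintype n] (e : m ≃ n) (N : Matrix n p R) :
    (Pl e : Matrix m n R) * N = N.submatrix e id := by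
  ext i j
  simp [Matrix.mul_apply, Pl_apply, ite_mul]

lemma mul_Pl [DecidableEq m] [DecidableEq n] [Fintype m] (e : m ≃ n) (N : Matrix p m R) :
    N * (Pl e : Matrix m n R) = N.submatrix id e.symm := by
  ext i j
  simp only [Matrix.mul_apply, Pl_apply, mul_ite, mul_one, mul_zero]
  have h2 : ∀ x : m, (if e x = j then N i x else 0) = if x = e.symm j then N i x else 0 := by
    intro x
    congr 1
    simp [Equiv.eq_symm_apply, eq_comm]
  simp only [h2, Finset.sum_ite_eq', Finset.mem_univ, if_true]
  rfl

lemma Pl_mul_Pl [DecidableEq m] [DecidableEq n] [Fintype n] (e : m ≃ n) :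
    (Pl e : Matrix m n R) * (Pl e.symm : Matrix n m R) = 1 := by
  rw [Pl_mul, Pl]
  ext i j
  rw [Matrix.submatrix_apply, Matrix.submatrix_apply, id_eq, Equiv.symm_apply_apply]
  rfl

lemma Pl_map {S : Type*} [Semiring S] [DecidableEq n]
    (e : m ≃ n) (f : R →+* S) : (Pl e : Matrix m n R).map f = (Pl e : Matrix m n S) := by
  ext i j
  simp [Pl_apply, apply_ite f]

end Pl

lemma hatM_Pl {m n : Type} [DecidableEq n] (e : m ≃ n) :
    hatM (Pl e : Matrix m n PolyU) = (Pl e : Matrix m n F2) := by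
  funext i j
  simp [hatM, Pl_apply, apply_ite (fun p : PolyU => p.coeff 0)]

/-- reassociation of a `d`-shaped triple tensor -/
lemma kron3_assoc {R : Type} [CommSemiring R] {α β γ : Type}
    [DecidableEq α] [DecidableEq β] [DecidableEq γ]
    (dA : Matrix α α R) (dB : Matrix β β R) (dC : Matrix γ γ R) :
    ((dA ⊗ₖ (1 : Matrix β β R) + (1 : Matrix α α R) ⊗ₖ dB) ⊗ₖ (1 : Matrix γ γ R)
        + (1 : Matrix (α × β) (α × β) R) ⊗ₖ dC).submatrix
      (Equiv.prodAssoc α β γ).symm (Equiv.prodAssoc α β γ).symm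
    = dA ⊗ₖ (1 : Matrix (β × γ) (β × γ) R)
      + (1 : Matrix α α R) ⊗ₖ (dB ⊗ₖ (1 : Matrix γ γ R) + (1 : Matrix β β R) ⊗ₖ dC) := by
  funext x y
  obtain ⟨a, b, c⟩ := x; obtain ⟨a', b', c'⟩ := y
  simp only [Matrix.submatrix_apply, Matrix.add_apply, kroneckerMap_apply,
    Matrix.one_apply, Equiv.prodAssoc, Equiv.coe_fn_symm_mk, Prod.mk.injEq]
  split_ifs <;> simp_all <;> ring

section Core
variable {A B G : Type} [Fintype A] [Fintype B] [Fintype G]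
  [DecidableEq A] [DecidableEq B] [DecidableEq G]

lemma core (dA iA pA gA : Matrix A A F2) (dB iB pB : Matrix B B F2) (dC iC pC gC : Matrix G G F2)
    (hiA : iA * dA = dA * iA) (hiB : iB * dB = dB * iB) (hiC : iC * dC = dC * iC)
    (hpA : pA * dA = dA * pA) (hpB : pB * dB = dB * pB) (hpC : pC * dC = dC * pC)
    (hgA : pA * pA = dA * gA + gA * dA) (hgC : pC * pC = dC * gC + gC * dC) :
    (iA ⊗ₖ (iB ⊗ₖ iC + (pB * iB) ⊗ₖ (iC * pC))
       + (pA * iA) ⊗ₖ ((iB ⊗ₖ iC + (pB * iB) ⊗ₖ (iC * pC))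
            * (pB ⊗ₖ (1 : Matrix G G F2) + (1 : Matrix B B F2) ⊗ₖ pC)))
    + ((iA ⊗ₖ iB + (pA * iA) ⊗ₖ (iB * pB)) ⊗ₖ iC
       + ((pA ⊗ₖ (1 : Matrix B B F2) + (1 : Matrix A A F2) ⊗ₖ pB)
            * (iA ⊗ₖ iB + (pA * iA) ⊗ₖ (iB * pB))) ⊗ₖ (iC * pC)).submatrix
        (Equiv.prodAssoc A B G).symm (Equiv.prodAssoc A B G).symm
    = (dA ⊗ₖ (1 : Matrix (B × G) (B × G) F2)
        + (1 : Matrix A A F2) ⊗ₖ (dB ⊗ₖ (1 : Matrix G G F2) + (1 : Matrix B B F2) ⊗ₖ dC))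
        * ((gA * iA) ⊗ₖ ((iB * pB) ⊗ₖ (iC * pC)) + (pA * iA) ⊗ₖ ((pB * iB) ⊗ₖ (iC * gC)))
      + ((gA * iA) ⊗ₖ ((iB * pB) ⊗ₖ (iC * pC)) + (pA * iA) ⊗ₖ ((pB * iB) ⊗ₖ (iC * gC)))
        * (dA ⊗ₖ (1 : Matrix (B × G) (B × G) F2)
            + (1 : Matrix A A F2) ⊗ₖ (dB ⊗ₖ (1 : Matrix G G F2) + (1 : Matrix B B F2) ⊗ₖ dC)) := by
  have hiA' : ∀ x : Matrix A A F2, iA * (dA * x) = dA * (iA * x) := fun x => by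
    rw [← mul_assoc, hiA, mul_assoc]
  have hiB' : ∀ x : Matrix B B F2, iB * (dB * x) = dB * (iB * x) := fun x => by
    rw [← mul_assoc, hiB, mul_assoc]
  have hiC' : ∀ x : Matrix G G F2, iC * (dC * x) = dC * (iC * x) := fun x => by
    rw [← mul_assoc, hiC, mul_assoc]
  have hpA' : ∀ x : Matrix A A F2, pA * (dA * x) = dA * (pA * x) := fun x => by
    rw [← mul_assoc, hpA, mul_assoc]
  have hpB' : ∀ x : Matrix B B F2, pB * (dB * x) = dB * (pB * x) := fun x => by
    rw [← mul_assoc, hpB, mul_assoc]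
  have hpC' : ∀ x : Matrix G G F2, pC * (dC * x) = dC * (pC * x) := fun x => by
    rw [← mul_assoc, hpC, mul_assoc]
  have hgA' : ∀ x : Matrix A A F2, pA * (pA * x) = dA * (gA * x) + gA * (dA * x) := fun x => by
    rw [← mul_assoc, hgA, add_mul, mul_assoc, mul_assoc]
  simp only [Matrix.add_kronecker, Matrix.kronecker_add, Matrix.submatrix_add, Pi.add_apply,
    Matrix.kronecker_assoc', add_mul, mul_add, ← Matrix.mul_kronecker_mul,
    Matrix.one_mul, Matrix.mul_one, one_mul, mul_one, mul_assoc,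
    hiA, hiB, hiC, hpA, hpB, hpC, hiA', hiB', hiC', hpA', hpB', hpC', hgA', hgC]
  have kill2 : ∀ (M : Matrix (A × B × G) (A × B × G) F2), (2 : ℕ) • M = 0 := fun M => by
    rw [two_nsmul]; exact addself M
  have kill2' : ∀ (M : Matrix (A × B × G) (A × B × G) F2), (2 : ℤ) • M = 0 := fun M => by
    rw [two_zsmul]; exact addself M
  abel_nf
  simp only [kill2, kill2', add_zero, zero_add]

end Core

section Conj
variable {R : Type*} [Semiring R] {m n : Type}
  [Fintype m] [Fintype n] [DecidableEq m] [DecidableEq n]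

lemma Pl_conj1 (e : m ≃ n) (M : Matrix n n R) (N : Matrix m m R)
    (h : N.submatrix e.symm e.symm = M) :
    (Pl e : Matrix m n R) * M = N * (Pl e : Matrix m n R) := by
  rw [Pl_mul, mul_Pl, ← h, Matrix.submatrix_submatrix]
  simp [Equiv.symm_comp_self, Function.comp_id]

lemma Pl_conj2 (e : m ≃ n) (M : Matrix n n R) (N : Matrix m m R)
    (h : N.submatrix e.symm e.symm = M) :
    (Pl e.symm : Matrix n m R) * N = M * (Pl e.symm : Matrix n m R) := by
  rw [Pl_mul, mul_Pl, ← h, Matrix.submatrix_submatrix]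
  simp [Equiv.symm_comp_self, Function.comp_id, Function.id_comp, Equiv.symm_symm]

end Conj

section ConjF2
variable {m n : Type} [Fintype m] [Fintype n] [DecidableEq m] [DecidableEq n]

lemma conj_fwd (e : m ≃ n) (dM : Matrix m m F2) (dN : Matrix n n F2)
    (iM : Matrix m m F2) (iN : Matrix n n F2) (K : Matrix n n F2)
    (hdF : dM.submatrix e.symm e.symm = dN)
    (hK : iN + iM.submatrix e.symm e.symm = dN * K + K * dN) :
    ∃ H : Matrix m n F2, iM * hatM (Pl e : Matrix m n PolyU) + hatM (Pl e : Matrix m n PolyU) * iN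
      = dM * H + H * dN := by
  rw [hatM_Pl]
  have hchainF := Pl_conj1 (R := F2) e dN dM hdF
  have h1 := Pl_mul (R := F2) e (iM.submatrix e.symm e.symm)
  simp only [Matrix.submatrix_submatrix, Equiv.symm_comp_self, Function.comp_id] at h1
  have h2 := mul_Pl (R := F2) e iM
  refine ⟨(Pl e : Matrix m n F2) * K, ?_⟩
  have step := congrArg (fun M : Matrix n n F2 => (Pl e : Matrix m n F2) * M) hK
  simp only [Matrix.mul_add] at step
  rw [h1, ← h2, ← Matrix.mul_assoc, hchainF, Matrix.mul_assoc, ← Matrix.mul_assoc _ K] at step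
  rw [add_comm]
  exact step

lemma conj_bwd (e : m ≃ n) (dM : Matrix m m F2) (dN : Matrix n n F2)
    (iM : Matrix m m F2) (iN : Matrix n n F2) (K : Matrix n n F2)
    (hdF : dM.submatrix e.symm e.symm = dN)
    (hK : iN + iM.submatrix e.symm e.symm = dN * K + K * dN) :
    ∃ H : Matrix n m F2, iN * hatM (Pl e.symm : Matrix n m PolyU)
      + hatM (Pl e.symm : Matrix n m PolyU) * iM = dN * H + H * dM := by
  rw [hatM_Pl]
  have hchainB := Pl_conj2 (R := F2) e dN dM hdF
  have h1 := mul_Pl (R := F2) e.symm (iM.submatrix e.symm e.symm)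
  simp only [Matrix.submatrix_submatrix, Equiv.symm_symm, Equiv.symm_comp_self,
    Function.comp_id] at h1
  have h2 := Pl_mul (R := F2) e.symm iM
  refine ⟨K * (Pl e.symm : Matrix n m F2), ?_⟩
  have step := congrArg (fun M : Matrix n n F2 => M * (Pl e.symm : Matrix n m F2)) hK
  simp only [Matrix.add_mul] at step
  rw [h1, ← h2, Matrix.mul_assoc, Matrix.mul_assoc, ← hchainB, ← Matrix.mul_assoc K] at step
  exact step

end ConjF2

/-- For horizontal almost `ι_K`-complexes `A, B, C`, the two
involutions `ι_{A⊗(B⊗C)}` and `ι_{(A⊗B)⊗C}` on the `U = 0` truncation of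
`A ⊗ B ⊗ C` (obtained by iterating the tensor construction in the two possible
ways, the latter transported along the canonical reassociation of basis
elements) are chain homotopic; hence the tensor operation on almost
`ι_K`-local equivalence classes is associative. -/
theorem tensor_assoc (X Y Z : Hor)
    (hX : IsHorizontal X) (hY : IsHorizontal Y) (hZ : IsHorizontal Z) :
    HatHomotopic (tensorCx X.C (tensorCx Y.C Z.C)) (tensorCx X.C (tensorCx Y.C Z.C))
      (tensorHor X (tensorHor Y Z)).iota
      ((tensorHor (tensorHor X Y) Z).iota.submatrix
        (Equiv.prodAssoc X.C.idx Y.C.idx Z.C.idx).symm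
        (Equiv.prodAssoc X.C.idx Y.C.idx Z.C.idx).symm) ∧
    AlmostLocalEquiv (tensorHor X (tensorHor Y Z)) (tensorHor (tensorHor X Y) Z) := by
  classical
  set e : (X.C.idx × Y.C.idx) × Z.C.idx ≃ X.C.idx × (Y.C.idx × Z.C.idx) :=
    Equiv.prodAssoc X.C.idx Y.C.idx Z.C.idx with he
  have hdX : X.C.d * X.C.d = 0 := hX.1.1
  have hdY : Y.C.d * Y.C.d = 0 := hY.1.1
  have hdZ : Z.C.d * Z.C.d = 0 := hZ.1.1
  have hiX : X.iota * X.C.dHat = X.C.dHat * X.iota := hX.2.2.1.1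
  have hiY : Y.iota * Y.C.dHat = Y.C.dHat * Y.iota := hY.2.2.1.1
  have hiZ : Z.iota * Z.C.dHat = Z.C.dHat * Z.iota := hZ.2.2.1.1
  have hp : ∀ (W : Hor), W.C.d * W.C.d = 0 →
      W.C.PhiHat * W.C.dHat = W.C.dHat * W.C.PhiHat := by
    intro W hW
    have h2 := congrArg hatM (phi_comm hW)
    rw [hatM_mul', hatM_mul'] at h2
    exact h2
  have hg : ∀ (W : Hor), W.C.d * W.C.d = 0 →
      W.C.PhiHat * W.C.PhiHat
        = W.C.dHat * hatM (HD2 W.C) + hatM (HD2 W.C) * W.C.dHat := by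
    intro W hW
    have h2 := congrArg hatM (phi_sq hW)
    rw [hatM_mul', hatM_add', hatM_mul', hatM_mul'] at h2
    exact h2
  -- the reassociation identity for the differentials, over `F₂[U]`
  have hd : ((tensorCx (tensorCx X.C Y.C) Z.C).d).submatrix e.symm e.symm
      = (tensorCx X.C (tensorCx Y.C Z.C)).d :=
    kron3_assoc X.C.d Y.C.d Z.C.d
  have hdF : ((tensorCx (tensorCx X.C Y.C) Z.C).dHat).submatrix e.symm e.symm
      = (tensorCx X.C (tensorCx Y.C Z.C)).dHat := by
    have h2 := congrArg hatM hd
    erw [hatM_submatrix] at h2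
    exact h2
  have hdL : ((tensorCx (tensorCx X.C Y.C) Z.C).dL).submatrix e.symm e.symm
      = (tensorCx X.C (tensorCx Y.C Z.C)).dL := by
    have h2 := congrArg (fun M => M.map toL) hd
    exact h2
  -- Part 1: the chain homotopy between the two involutions
  have hpart1 : HatHomotopic (tensorCx X.C (tensorCx Y.C Z.C)) (tensorCx X.C (tensorCx Y.C Z.C))
      (tensorHor X (tensorHor Y Z)).iota
      ((tensorHor (tensorHor X Y) Z).iota.submatrix e.symm e.symm) := by
    refine ⟨(hatM (HD2 X.C) * X.iota) ⊗ₖ ((Y.iota * Y.C.PhiHat) ⊗ₖ (Z.iota * Z.C.PhiHat))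
      + (X.C.PhiHat * X.iota) ⊗ₖ ((Y.C.PhiHat * Y.iota) ⊗ₖ (Z.iota * hatM (HD2 Z.C))), ?_⟩
    simp only [tensorHor]
    rw [PhiHat_tensor, PhiHat_tensor, dHat_tensor, dHat_tensor]
    exact core X.C.dHat X.iota X.C.PhiHat (hatM (HD2 X.C)) Y.C.dHat Y.iota Y.C.PhiHat
      Z.C.dHat Z.iota Z.C.PhiHat (hatM (HD2 Z.C)) hiX hiY hiZ
      (hp X hdX) (hp Y hdY) (hp Z hdZ) (hg X hdX) (hg Z hdZ)
  have hPP1 : (Pl e : Matrix ((X.C.idx × Y.C.idx) × Z.C.idx) (X.C.idx × (Y.C.idx × Z.C.idx)) Laur)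
      * (Pl e.symm : Matrix (X.C.idx × (Y.C.idx × Z.C.idx)) ((X.C.idx × Y.C.idx) × Z.C.idx) Laur)
      = 1 := Pl_mul_Pl e
  have hPP2 : (Pl e.symm : Matrix (X.C.idx × (Y.C.idx × Z.C.idx)) ((X.C.idx × Y.C.idx) × Z.C.idx) Laur)
      * (Pl e : Matrix ((X.C.idx × Y.C.idx) × Z.C.idx) (X.C.idx × (Y.C.idx × Z.C.idx)) Laur)
      = 1 := by
    have h2 := Pl_mul_Pl (R := Laur) e.symm
    rwa [Equiv.symm_symm] at h2
  refine ⟨hpart1, ?_, ?_⟩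
  · -- forward almost local map: the permutation matrix `Pl e`
    refine ⟨(Pl e : Matrix ((X.C.idx × Y.C.idx) × Z.C.idx) (X.C.idx × (Y.C.idx × Z.C.idx)) PolyU),
      ?_, ?_, ?_, ?_⟩
    · -- graded
      intro i j k hk
      erw [Pl_apply] at hk
      by_cases hij : e i = j
      · subst hij
        have hk0 : k = 0 := by by_contra hne; simp [Polynomial.coeff_one, hne] at hk
        subst hk0
        obtain ⟨⟨a, b⟩, c⟩ := i
        show ((X.C.gr a + Y.C.gr b) + Z.C.gr c) + _ = (X.C.gr a + (Y.C.gr b + Z.C.gr c)) + _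
        simp [Prod.mk_zero_zero, add_assoc]
      · simp [hij] at hk
    · exact Pl_conj1 e _ _ hd
    · refine ⟨(Pl e.symm : Matrix (X.C.idx × (Y.C.idx × Z.C.idx)) ((X.C.idx × Y.C.idx) × Z.C.idx) Laur),
        Pl_conj2 e _ _ hdL, ⟨0, ?_⟩, ⟨0, ?_⟩⟩
      · erw [mul_zero, zero_mul, add_zero, Pl_map, hPP2]
        exact addself 1
      · erw [mul_zero, zero_mul, add_zero, Pl_map, hPP1]
        exact addself 1
    · -- hat homotopy with the involutions
      obtain ⟨K, hK⟩ := hpart1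
      exact conj_fwd e _ _ _ _ K hdF hK
  · -- backward almost local map: the permutation matrix `Pl e.symm`
    refine ⟨(Pl e.symm : Matrix (X.C.idx × (Y.C.idx × Z.C.idx)) ((X.C.idx × Y.C.idx) × Z.C.idx) PolyU),
      ?_, ?_, ?_, ?_⟩
    · -- graded
      intro i j k hk
      erw [Pl_apply] at hk
      by_cases hij : e.symm i = j
      · subst hij
        have hk0 : k = 0 := by by_contra hne; simp [Polynomial.coeff_one, hne] at hk
        subst hk0
        obtain ⟨a, b, c⟩ := i
        show (X.C.gr a + (Y.C.gr b + Z.C.gr c)) + _ = ((X.C.gr a + Y.C.gr b) + Z.C.gr c) + _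
        simp [Prod.mk_zero_zero, add_assoc]
      · simp [hij] at hk
    · exact Pl_conj2 e _ _ hd
    · refine ⟨(Pl e : Matrix ((X.C.idx × Y.C.idx) × Z.C.idx) (X.C.idx × (Y.C.idx × Z.C.idx)) Laur),
        Pl_conj1 e _ _ hdL, ⟨0, ?_⟩, ⟨0, ?_⟩⟩
      · rw [mul_zero, zero_mul, add_zero]; erw [Pl_map, hPP1]
        exact addself 1
      · rw [mul_zero, zero_mul, add_zero]; erw [Pl_map, hPP2]
        exact addself 1
    · obtain ⟨K, hK⟩ := hpart1
      exact conj_bwd e _ _ _ _ K hdF hK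

end
end

section
/- Let (C, ι) be a horizontal almost ι_K-complex and equip its dual C* with the dual involution ι*. Then the trace map tr : C ⊗_{F₂[U]} C* → F₂[U] and the cotrace map cotr : F₂[U] → C ⊗_{F₂[U]} C* are almost ι_K-local maps between (C,ι)⊗(C*,ι*) and the trivial complex C_O; consequently (C,ι)⊗(C*,ι*) is almost ι_K-locally equivalent to C_O, so the class of the dual is the inverse of the class of (C,ι). -/
/-!
Algebraic model for horizontal almost `ι_K`-complexes (Kang–Park,
"Torsion in the knot concordance group and cabling").

Conventions.  We work over `F₂ = ℤ/2`.  A bigraded chain complex of finitely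
generated free `F₂[U]`-modules is presented by a finite homogeneous basis
`idx`, a bidegree function `gr : idx → ℤ × ℤ` (Alexander and Maslov gradings),
and a differential matrix `d` over `F₂[U]` (the `j`-th basis vector is sent to
`∑ i, d i j • eᵢ`; matrix multiplication is composition).  The variable `U`
has bidegree `(−1, −2)` and the differential has bidegree `(0, −1)`.
-/

open Polynomial Matrix Kronecker

noncomputable section

namespace TraceProof

variable {n : Type} [Fintype n] [DecidableEq n] {R : Type} [CommRing R]

/-- Row vector associated to a square matrix (viewing it as an element of the
dual of the tensor product). -/
def rV (B : Matrix n n R) : Matrix Unit (n × n) R := fun _ p => B p.1 p.2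

/-- Column vector associated to a square matrix. -/
def cV (B : Matrix n n R) : Matrix (n × n) Unit R := fun p _ => B p.1 p.2

lemma rV_add (A B : Matrix n n R) : rV (A + B) = rV A + rV B := by
  ext _ p; simp [rV]

lemma cV_add (A B : Matrix n n R) : cV (A + B) = cV A + cV B := by
  ext p _; simp [cV]

lemma rV_mul_kron (B P Q : Matrix n n R) :
    rV B * (P ⊗ₖ Q) = rV (Pᵀ * B * Q) := by
  ext u ⟨k, l⟩
  simp only [rV, Matrix.mul_apply, Matrix.kroneckerMap_apply, Fintype.sum_prod_type,
    Matrix.transpose_apply, Finset.sum_mul, Finset.mul_sum]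
  rw [Finset.sum_comm]
  apply Finset.sum_congr rfl; intro b _
  apply Finset.sum_congr rfl; intro a _
  ring

lemma kron_mul_cV (B P Q : Matrix n n R) :
    (P ⊗ₖ Q) * cV B = cV (P * B * Qᵀ) := by
  ext ⟨i, j⟩ u
  simp only [cV, Matrix.mul_apply, Matrix.kroneckerMap_apply, Fintype.sum_prod_type,
    Matrix.transpose_apply, Finset.sum_mul, Finset.mul_sum]
  rw [Finset.sum_comm]
  apply Finset.sum_congr rfl; intro b _
  apply Finset.sum_congr rfl; intro a _
  ring

lemma rV_one_mul_cV (f : Matrix Unit n R) (g : Matrix n Unit R) :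
    rV (1 : Matrix n n R) * cV (g * f) = f * g := by
  ext u v
  simp only [rV, cV, Matrix.mul_apply, Fintype.sum_prod_type, Matrix.one_apply,
    Finset.sum_ite_eq, Finset.mem_univ, if_true, ite_mul, one_mul, zero_mul]
  simp only [Finset.sum_ite_eq, Finset.mem_univ, if_true, Fintype.sum_unique]
  apply Finset.sum_congr rfl; intro a _
  ring

lemma rV_t_mul_cV_one (f : Matrix Unit n R) (g : Matrix n Unit R) :
    rV ((g * f)ᵀ) * cV (1 : Matrix n n R) = f * g := by
  ext u v
  simp only [rV, cV, Matrix.mul_apply, Fintype.sum_prod_type, Matrix.one_apply,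
    Matrix.transpose_apply, Fintype.sum_unique, mul_ite, mul_one, mul_zero, Finset.sum_ite_eq,
    Finset.sum_ite_eq', Finset.mem_univ, if_true]
  apply Finset.sum_congr rfl; intro a _
  ring

lemma cV_mul_rV_rank_one (f : Matrix Unit n R) (g : Matrix n Unit R) :
    cV (g * f) * rV ((g * f)ᵀ) = (g * f) ⊗ₖ (g * f)ᵀ := by
  ext ⟨i, j⟩ ⟨k, l⟩
  simp only [cV, rV, Matrix.mul_apply, Matrix.kroneckerMap_apply, Matrix.transpose_apply,
    Fintype.sum_unique]
  ring

/-- Chaining homotopies in characteristic two. -/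
lemma chain2 {S : Type} [NonUnitalNonAssocRing S] (h2 : ∀ x : S, x + x = 0)
    {D a b c K K' : S} (hab : a + b = D * K + K * D) (hbc : b + c = D * K' + K' * D) :
    a + c = D * (K + K') + (K + K') * D := by
  have h : a + b + (b + c) = a + c := by
    rw [show a + b + (b + c) = a + (b + b) + c from by abel, h2 b, add_zero]
  rw [← h, hab, hbc, mul_add, add_mul]
  abel

lemma kron_comm_homotopy (d A B : Matrix n n R) :
    (d ⊗ₖ 1 + 1 ⊗ₖ dᵀ) * (A ⊗ₖ B) + (A ⊗ₖ B) * (d ⊗ₖ 1 + 1 ⊗ₖ dᵀ)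
      = (d * A + A * d) ⊗ₖ B + A ⊗ₖ (dᵀ * B + B * dᵀ) := by
  simp only [add_mul, mul_add, ← Matrix.mul_kronecker_mul, Matrix.one_mul, Matrix.mul_one,
    Matrix.add_kronecker, Matrix.kronecker_add]
  abel

end TraceProof
namespace TraceProof
variable {n : Type} [Fintype n] [DecidableEq n] {R : Type} [CommRing R]

lemma rV_zero : rV (0 : Matrix n n R) = 0 := by ext _ p; simp [rV]
lemma cV_zero : cV (0 : Matrix n n R) = 0 := by ext p _; simp [cV]

end TraceProof
namespace TraceProof

lemma polyU_add_self (a : PolyU) : a + a = 0 := by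
  have h2 : (1 + 1 : PolyU) = 0 := by
    rw [← Polynomial.C_1, ← Polynomial.C_add]
    norm_num
    rfl
  calc a + a = (1 + 1) * a := by ring
  _ = 0 := by rw [h2, zero_mul]

lemma laur_add_self (a : Laur) : a + a = 0 := by
  have h2 : (1 + 1 : Laur) = 0 := by
    calc (1 + 1 : Laur) = toL (1 + 1) := by simp
    _ = 0 := by rw [polyU_add_self 1, map_zero]
  calc a + a = (1 + 1) * a := by ring
  _ = 0 := by rw [h2, zero_mul]

lemma f2_add_self (a : F2) : a + a = 0 := by revert a; decide

lemma mat_add_self {m n : Type} [Fintype m] [Fintype n] {R : Type} [CommRing R]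
    (h : ∀ a : R, a + a = 0) (A : Matrix m n R) : A + A = 0 := by
  ext i j; simp [h]

/-- `hatM` as `map` of the constant coefficient ring hom. -/
lemma hatM_eq {m n : Type} (A : Matrix m n PolyU) :
    hatM A = A.map (Polynomial.constantCoeff (R := F2)) := rfl

lemma hatM_add {m n : Type} (A B : Matrix m n PolyU) : hatM (A + B) = hatM A + hatM B := by
  ext i j; simp [hatM]

lemma hatM_kron {m n p q : Type} (A : Matrix m n PolyU) (B : Matrix p q PolyU) :
    hatM (A ⊗ₖ B) = hatM A ⊗ₖ hatM B := by
  ext ⟨i, j⟩ ⟨k, l⟩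
  simp [hatM, Polynomial.mul_coeff_zero]

lemma hatM_one {n : Type} [DecidableEq n] : hatM (1 : Matrix n n PolyU) = 1 := by
  ext i j
  simp [hatM, Matrix.one_apply, apply_ite (fun p : PolyU => p.coeff 0)]

lemma hatM_zero {m n : Type} : hatM (0 : Matrix m n PolyU) = 0 := by
  ext i j; simp [hatM]

lemma hatM_transpose {m n : Type} (A : Matrix m n PolyU) : hatM Aᵀ = (hatM A)ᵀ := rfl

lemma mapL_kron {m n p q : Type} (A : Matrix m n PolyU) (B : Matrix p q PolyU) :
    (A ⊗ₖ B).map toL = A.map toL ⊗ₖ B.map toL := by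
  ext ⟨i, j⟩ ⟨k, l⟩
  simp [Matrix.map_apply]

lemma mapL_add {m n : Type} (A B : Matrix m n PolyU) :
    (A + B).map toL = A.map toL + B.map toL := by
  ext i j; simp [Matrix.map_apply]

lemma mapL_one {n : Type} [DecidableEq n] : (1 : Matrix n n PolyU).map toL = 1 := by
  ext i j
  simp [Matrix.map_apply, Matrix.one_apply, apply_ite toL]

lemma mapL_zero {m n : Type} : (0 : Matrix m n PolyU).map toL = 0 := by
  ext i j; simp [Matrix.map_apply]

lemma mapL_transpose {m n : Type} (A : Matrix m n PolyU) : Aᵀ.map toL = (A.map toL)ᵀ := rfl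

/-- differential of the tensor complex, localized -/
lemma tensor_dL (C D : CxData) :
    (tensorCx C D).dL = C.dL ⊗ₖ (1 : Matrix D.idx D.idx Laur)
      + (1 : Matrix C.idx C.idx Laur) ⊗ₖ D.dL := by
  show ((C.d ⊗ₖ 1 + 1 ⊗ₖ D.d).map toL) = _
  rw [mapL_add, mapL_kron, mapL_kron, mapL_one, mapL_one]
  rfl

/-- differential of the tensor complex, truncated -/
lemma tensor_dHat (C D : CxData) :
    (tensorCx C D).dHat = C.dHat ⊗ₖ (1 : Matrix D.idx D.idx F2)
      + (1 : Matrix C.idx C.idx F2) ⊗ₖ D.dHat := by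
  show hatM (C.d ⊗ₖ 1 + 1 ⊗ₖ D.d) = _
  erw [hatM_add, hatM_kron, hatM_kron, hatM_one, hatM_one]
  rfl

lemma dual_dL (C : CxData) : (dualCx C).dL = C.dLᵀ := rfl

lemma dual_dHat (C : CxData) : (dualCx C).dHat = C.dHatᵀ := rfl

lemma dual_PhiHat (C : CxData) : (dualCx C).PhiHat = C.PhiHatᵀ := rfl

lemma CO_dL : CO.C.dL = 0 := by
  show (0 : Matrix Unit Unit PolyU).map toL = 0
  exact mapL_zero

lemma CO_dHat : CO.C.dHat = 0 := by
  show hatM (0 : Matrix Unit Unit PolyU) = 0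
  exact hatM_zero

/-- the trace map as a row vector -/
lemma trMap_eq (C : CxData) : trMap C = rV (1 : Matrix C.idx C.idx PolyU) := by
  ext u ⟨a, b⟩; simp [trMap, rV, Matrix.one_apply]

lemma cotrMap_eq (C : CxData) : cotrMap C = cV (1 : Matrix C.idx C.idx PolyU) := by
  ext ⟨a, b⟩ u; simp [cotrMap, cV, Matrix.one_apply]

lemma mapL_rV {n : Type} [Fintype n] [DecidableEq n] (B : Matrix n n PolyU) :
    (rV B).map toL = rV (B.map toL) := rfl

lemma mapL_cV {n : Type} [Fintype n] [DecidableEq n] (B : Matrix n n PolyU) :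
    (cV B).map toL = cV (B.map toL) := rfl

lemma hatM_rV {n : Type} [Fintype n] [DecidableEq n] (B : Matrix n n PolyU) :
    hatM (rV B) = rV (hatM B) := rfl

lemma hatM_cV {n : Type} [Fintype n] [DecidableEq n] (B : Matrix n n PolyU) :
    hatM (cV B) = cV (hatM B) := rfl

end TraceProof

open TraceProof

/-- For a horizontal almost `ι_K`-complex `(C, ι)` with dual
`(C*, ι*)`, the trace map `tr : C ⊗ C* → F₂[U]` and the cotrace map
`cotr : F₂[U] → C ⊗ C*` are almost `ι_K`-local maps between `(C,ι) ⊗ (C*,ι*)`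
and the trivial complex `C_O`; consequently `(C,ι) ⊗ (C*,ι*)` is almost
`ι_K`-locally equivalent to `C_O`, so the class of the dual is the inverse of
the class of `(C, ι)`. -/
theorem trace_cotrace_local (X : Hor) (hX : IsHorizontal X) :
    AlmostLocalMap (tensorHor X (dualHor X)) CO (trMap X.C) ∧
    AlmostLocalMap CO (tensorHor X (dualHor X)) (cotrMap X.C) ∧
    AlmostLocalEquiv (tensorHor X (dualHor X)) CO := by
  obtain ⟨-, hloc, -, -, -, hsq, -⟩ := hX
  obtain ⟨f, g, hfd, hdg, hfg, H, hH⟩ := hloc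
  obtain ⟨Q, hQ⟩ := hsq
  have hTd : (tensorHor X (dualHor X)).C.d
      = X.C.d ⊗ₖ (1 : Matrix X.C.idx X.C.idx PolyU)
        + (1 : Matrix X.C.idx X.C.idx PolyU) ⊗ₖ X.C.dᵀ := rfl
  have hTdL : (tensorHor X (dualHor X)).C.dL
      = X.C.dL ⊗ₖ (1 : Matrix X.C.idx X.C.idx Laur)
        + (1 : Matrix X.C.idx X.C.idx Laur) ⊗ₖ X.C.dLᵀ := by
    show (tensorCx X.C (dualCx X.C)).dL = _
    rw [tensor_dL, dual_dL]; rfl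
  have hTdHat : (tensorHor X (dualHor X)).C.dHat
      = X.C.dHat ⊗ₖ (1 : Matrix X.C.idx X.C.idx F2)
        + (1 : Matrix X.C.idx X.C.idx F2) ⊗ₖ X.C.dHatᵀ := by
    show (tensorCx X.C (dualCx X.C)).dHat = _
    rw [tensor_dHat, dual_dHat]; rfl
  have hTiota : (tensorHor X (dualHor X)).iota
      = X.iota ⊗ₖ X.iotaᵀ + (X.C.PhiHat * X.iota) ⊗ₖ (X.iotaᵀ * X.C.PhiHatᵀ) := rfl
  have htrL : (trMap X.C).map toL = rV (1 : Matrix X.C.idx X.C.idx Laur) := by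
    rw [trMap_eq, mapL_rV, mapL_one]
  have hcotrL : (cotrMap X.C).map toL = cV (1 : Matrix X.C.idx X.C.idx Laur) := by
    rw [cotrMap_eq, mapL_cV, mapL_one]
  have htrHat : hatM (trMap X.C) = rV (1 : Matrix X.C.idx X.C.idx F2) := by
    rw [trMap_eq, hatM_rV, hatM_one]
  have hcotrHat : hatM (cotrMap X.C) = cV (1 : Matrix X.C.idx X.C.idx F2) := by
    rw [cotrMap_eq, hatM_cV, hatM_one]
  set dl := X.C.dL with hdl
  set e : Matrix X.C.idx X.C.idx Laur := g * f with he
  have hdle : dl * e = 0 := by rw [he, ← Matrix.mul_assoc, hdg, Matrix.zero_mul]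
  have hedl : e * dl = 0 := by rw [he, Matrix.mul_assoc, hfd, Matrix.mul_zero]
  have hHe : 1 + e = dl * H + H * dl := hH
  have hHeT : 1 + eᵀ = Hᵀ * dlᵀ + dlᵀ * Hᵀ := by
    have := congrArg Matrix.transpose hHe
    simpa [Matrix.transpose_add, Matrix.transpose_mul] using this
  set DT : Matrix (X.C.idx × X.C.idx) (X.C.idx × X.C.idx) Laur
    := dl ⊗ₖ (1 : Matrix X.C.idx X.C.idx Laur)
      + (1 : Matrix X.C.idx X.C.idx Laur) ⊗ₖ dlᵀ with hDT
  have hDTcV : ∀ B : Matrix X.C.idx X.C.idx Laur,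
      DT * cV B = cV (dl * B + B * dl) := by
    intro B
    rw [hDT, Matrix.add_mul, kron_mul_cV, kron_mul_cV, Matrix.transpose_one, Matrix.mul_one,
      Matrix.one_mul, Matrix.transpose_transpose, ← cV_add]
  have hrVDT : ∀ B : Matrix X.C.idx X.C.idx Laur,
      rV B * DT = rV (dlᵀ * B + B * dlᵀ) := by
    intro B
    rw [hDT, Matrix.mul_add, rV_mul_kron, rV_mul_kron, Matrix.transpose_one, Matrix.mul_one,
      Matrix.one_mul, ← rV_add]
  have hDTe : DT * cV e = 0 := by rw [hDTcV, hdle, hedl, add_zero, cV_zero]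
  have heDT : rV eᵀ * DT = 0 := by
    rw [hrVDT, ← Matrix.transpose_mul, ← Matrix.transpose_mul, hdle, hedl]
    simp [rV_zero]
  have m2 : ∀ A : Matrix (X.C.idx × X.C.idx) (X.C.idx × X.C.idx) Laur, A + A = 0 :=
    mat_add_self laur_add_self
  have hrank : cV e * rV eᵀ = e ⊗ₖ eᵀ := by rw [he]; exact cV_mul_rV_rank_one f g
  -- shared homotopy steps
  have s2 : e ⊗ₖ eᵀ + e ⊗ₖ (1 : Matrix X.C.idx X.C.idx Laur)
      = DT * (e ⊗ₖ Hᵀ) + (e ⊗ₖ Hᵀ) * DT := by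
    rw [hDT, kron_comm_homotopy, hdle, hedl, add_zero, Matrix.zero_kronecker, zero_add,
      show dlᵀ * Hᵀ + Hᵀ * dlᵀ = 1 + eᵀ from by rw [hHeT]; abel, Matrix.kronecker_add]
    abel
  have s3 : e ⊗ₖ (1 : Matrix X.C.idx X.C.idx Laur) + 1
      = DT * (H ⊗ₖ (1 : Matrix X.C.idx X.C.idx Laur))
        + (H ⊗ₖ (1 : Matrix X.C.idx X.C.idx Laur)) * DT := by
    rw [hDT, kron_comm_homotopy, ← hHe, Matrix.mul_one, Matrix.one_mul,
      mat_add_self laur_add_self dlᵀ, Matrix.kronecker_zero, add_zero,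
      Matrix.add_kronecker, Matrix.one_kronecker_one]
    abel
  have s1 : cV e * rV (1 : Matrix X.C.idx X.C.idx Laur) + e ⊗ₖ eᵀ
      = DT * (cV e * rV Hᵀ) + (cV e * rV Hᵀ) * DT := by
    rw [← Matrix.mul_assoc, hDTe, Matrix.zero_mul, zero_add, ← hrank, ← Matrix.mul_add,
      ← rV_add, Matrix.mul_assoc, hrVDT,
      show dlᵀ * Hᵀ + Hᵀ * dlᵀ = 1 + eᵀ from by rw [hHeT]; abel]
  have t1 : cV (1 : Matrix X.C.idx X.C.idx Laur) * rV eᵀ + e ⊗ₖ eᵀ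
      = DT * (cV H * rV eᵀ) + (cV H * rV eᵀ) * DT := by
    rw [Matrix.mul_assoc, heDT, Matrix.mul_zero, add_zero, ← hrank, ← Matrix.add_mul,
      ← cV_add, ← Matrix.mul_assoc, hDTcV, ← hHe]
  -- the two local maps
  have hA : AlmostLocalMap (tensorHor X (dualHor X)) CO (trMap X.C) := by
    refine ⟨?_, ?_, ?_, ?_⟩
    · intro i j k hk
      by_cases hj : j.1 = j.2
      · have hk0 : k = 0 := by
          by_contra hne
          have h1 : trMap X.C i j = 1 := if_pos hj; simp [h1, Polynomial.coeff_one, hne, Ne.symm hne] at hk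
        subst hk0
        have hgr : (tensorHor X (dualHor X)).C.gr j = X.C.gr j.1 + -(X.C.gr j.2) := rfl
        rw [hgr, hj]
        show ((0:ℤ), (0:ℤ)) + _ = _
        simp
        all_goals rfl
      · simp [trMap, hj] at hk
    · show trMap X.C * (X.C.d ⊗ₖ (1 : Matrix X.C.idx X.C.idx PolyU) + (1 : Matrix X.C.idx X.C.idx PolyU) ⊗ₖ X.C.dᵀ) = (0 : Matrix Unit Unit PolyU) * trMap X.C
      rw [Matrix.zero_mul,
        trMap_eq, Matrix.mul_add, rV_mul_kron, rV_mul_kron]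
      simp only [Matrix.transpose_one, Matrix.mul_one, Matrix.one_mul]
      rw [← rV_add, mat_add_self polyU_add_self, rV_zero]
    · refine ⟨cV e, ?_, ?_, ?_⟩
      · rw [CO_dL, hTdL]
        show cV e * (0 : Matrix Unit Unit Laur) = DT * cV e
        rw [Matrix.mul_zero, hDTe]
      · refine ⟨cV e * rV Hᵀ + (e ⊗ₖ Hᵀ + H ⊗ₖ (1 : Matrix X.C.idx X.C.idx Laur)), ?_⟩
        rw [hTdL]
        show cV e * (trMap X.C).map toL + (1 : Matrix (X.C.idx × X.C.idx) (X.C.idx × X.C.idx) Laur) = DT * (cV e * rV Hᵀ + (e ⊗ₖ Hᵀ + H ⊗ₖ (1 : Matrix X.C.idx X.C.idx Laur)))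
          + (cV e * rV Hᵀ + (e ⊗ₖ Hᵀ + H ⊗ₖ (1 : Matrix X.C.idx X.C.idx Laur))) * DT
        rw [htrL]
        exact chain2 m2 s1 (chain2 m2 s2 s3)
      · refine ⟨0, ?_⟩
        rw [CO_dL]
        show (trMap X.C).map toL * cV e + (1 : Matrix Unit Unit Laur) = (0 : Matrix Unit Unit Laur) * (0 : Matrix Unit Unit Laur) + (0 : Matrix Unit Unit Laur) * (0 : Matrix Unit Unit Laur)
        rw [htrL,
          show rV (1 : Matrix X.C.idx X.C.idx Laur) * cV e = 1 from by
            rw [he, rV_one_mul_cV, hfg]]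
        simp only [Matrix.mul_zero, Matrix.zero_mul, add_zero]
        exact mat_add_self laur_add_self 1
    · refine ⟨rV Qᵀ, ?_⟩
      rw [CO_dHat, hTdHat]
      show (1 : Matrix Unit Unit F2) * hatM (trMap X.C) + hatM (trMap X.C) * (X.iota ⊗ₖ X.iotaᵀ
          + (X.C.PhiHat * X.iota) ⊗ₖ (X.iotaᵀ * X.C.PhiHatᵀ)) = (0 : Matrix Unit Unit F2) * rV Qᵀ
          + rV Qᵀ * (X.C.dHat ⊗ₖ (1 : Matrix X.C.idx X.C.idx F2) + (1 : Matrix X.C.idx X.C.idx F2) ⊗ₖ X.C.dHatᵀ)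
      rw [Matrix.zero_mul, zero_add,
        Matrix.one_mul, htrHat, Matrix.mul_add, rV_mul_kron, rV_mul_kron,
        Matrix.mul_add, rV_mul_kron, rV_mul_kron]
      simp only [Matrix.transpose_one, Matrix.transpose_mul, Matrix.transpose_transpose,
        Matrix.mul_one, Matrix.one_mul]
      rw [← rV_add, ← rV_add, ← rV_add]
      refine congrArg rV ?_
      trans ((1 : Matrix X.C.idx X.C.idx F2) + X.iotaᵀ * X.iotaᵀ
        + X.iotaᵀ * X.C.PhiHatᵀ * X.iotaᵀ * X.C.PhiHatᵀ)
      · noncomm_ring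
      trans (X.C.dHatᵀ * Qᵀ + Qᵀ * X.C.dHatᵀ)
      · have hQt := congrArg Matrix.transpose hQ
        simp only [Matrix.transpose_add, Matrix.transpose_mul, Matrix.transpose_one] at hQt
        calc (1 : Matrix X.C.idx X.C.idx F2) + X.iotaᵀ * X.iotaᵀ
              + X.iotaᵀ * X.C.PhiHatᵀ * X.iotaᵀ * X.C.PhiHatᵀ
            = X.iotaᵀ * X.iotaᵀ + (1 + X.iotaᵀ * (X.C.PhiHatᵀ * (X.iotaᵀ * X.C.PhiHatᵀ))) := by
              noncomm_ring
          _ = Qᵀ * X.C.dHatᵀ + X.C.dHatᵀ * Qᵀ := hQt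
          _ = X.C.dHatᵀ * Qᵀ + Qᵀ * X.C.dHatᵀ := by abel
      · noncomm_ring
  have hB : AlmostLocalMap CO (tensorHor X (dualHor X)) (cotrMap X.C) := by
    refine ⟨?_, ?_, ?_, ?_⟩
    · intro i j k hk
      by_cases hi : i.1 = i.2
      · have hk0 : k = 0 := by
          by_contra hne
          have h1 : cotrMap X.C i j = 1 := if_pos hi; simp [h1, Polynomial.coeff_one, hne, Ne.symm hne] at hk
        subst hk0
        have hgr : (tensorHor X (dualHor X)).C.gr i = X.C.gr i.1 + -(X.C.gr i.2) := rfl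
        rw [hgr, hi]
        simp
        all_goals rfl
      · simp [cotrMap, hi] at hk
    · show cotrMap X.C * (0 : Matrix Unit Unit PolyU) = (X.C.d ⊗ₖ (1 : Matrix X.C.idx X.C.idx PolyU) + (1 : Matrix X.C.idx X.C.idx PolyU) ⊗ₖ X.C.dᵀ) * cotrMap X.C
      rw [Matrix.mul_zero,
        cotrMap_eq, Matrix.add_mul, kron_mul_cV, kron_mul_cV]
      simp only [Matrix.transpose_one, Matrix.transpose_transpose, Matrix.mul_one,
        Matrix.one_mul]
      rw [← cV_add, mat_add_self polyU_add_self, cV_zero]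
    · refine ⟨rV eᵀ, ?_, ?_, ?_⟩
      · rw [CO_dL, hTdL]
        show rV eᵀ * DT = (0 : Matrix Unit Unit Laur) * rV eᵀ
        rw [Matrix.zero_mul, heDT]
      · refine ⟨0, ?_⟩
        rw [CO_dL]
        show rV eᵀ * (cotrMap X.C).map toL + (1 : Matrix Unit Unit Laur) = (0 : Matrix Unit Unit Laur) * (0 : Matrix Unit Unit Laur) + (0 : Matrix Unit Unit Laur) * (0 : Matrix Unit Unit Laur)
        rw [hcotrL,
          show rV eᵀ * cV (1 : Matrix X.C.idx X.C.idx Laur) = 1 from by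
            rw [he, rV_t_mul_cV_one, hfg]]
        simp only [Matrix.mul_zero, Matrix.zero_mul, add_zero]
        exact mat_add_self laur_add_self 1
      · refine ⟨cV H * rV eᵀ + (e ⊗ₖ Hᵀ + H ⊗ₖ (1 : Matrix X.C.idx X.C.idx Laur)), ?_⟩
        rw [hTdL]
        show (cotrMap X.C).map toL * rV eᵀ + (1 : Matrix (X.C.idx × X.C.idx) (X.C.idx × X.C.idx) Laur) = DT * (cV H * rV eᵀ + (e ⊗ₖ Hᵀ + H ⊗ₖ (1 : Matrix X.C.idx X.C.idx Laur)))
          + (cV H * rV eᵀ + (e ⊗ₖ Hᵀ + H ⊗ₖ (1 : Matrix X.C.idx X.C.idx Laur))) * DT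
        rw [hcotrL]
        exact chain2 m2 t1 (chain2 m2 s2 s3)
    · refine ⟨cV Q, ?_⟩
      rw [CO_dHat, hTdHat]
      show (X.iota ⊗ₖ X.iotaᵀ + (X.C.PhiHat * X.iota) ⊗ₖ (X.iotaᵀ * X.C.PhiHatᵀ)) * hatM (cotrMap X.C)
          + hatM (cotrMap X.C) * (1 : Matrix Unit Unit F2)
          = (X.C.dHat ⊗ₖ (1 : Matrix X.C.idx X.C.idx F2) + (1 : Matrix X.C.idx X.C.idx F2) ⊗ₖ X.C.dHatᵀ) * cV Q + cV Q * (0 : Matrix Unit Unit F2)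
      rw [Matrix.mul_zero, add_zero,
        Matrix.mul_one, hcotrHat, Matrix.add_mul, kron_mul_cV, kron_mul_cV,
        Matrix.add_mul, kron_mul_cV, kron_mul_cV]
      simp only [Matrix.transpose_one, Matrix.transpose_mul, Matrix.transpose_transpose,
        Matrix.mul_one, Matrix.one_mul]
      rw [← cV_add, ← cV_add, ← cV_add]
      refine congrArg cV ?_
      trans (X.iota * X.iota + X.C.PhiHat * X.iota * X.C.PhiHat * X.iota
        + (1 : Matrix X.C.idx X.C.idx F2))
      · noncomm_ring
      trans (X.C.dHat * Q + Q * X.C.dHat)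
      · calc X.iota * X.iota + X.C.PhiHat * X.iota * X.C.PhiHat * X.iota
              + (1 : Matrix X.C.idx X.C.idx F2)
            = X.iota * X.iota + (1 + X.C.PhiHat * X.iota * X.C.PhiHat * X.iota) := by abel
          _ = X.C.dHat * Q + Q * X.C.dHat := hQ
      · noncomm_ring
  exact ⟨hA, hB, ⟨_, hA⟩, ⟨_, hB⟩⟩

end
end

section
/- If f : (C₁,ι₁) → (C₂,ι₂) is an almost ι_K-local map of horizontal almost ι_K-complexes and (D,ι_D) is any horizontal almost ι_K-complex, then f ⊗ id_D is an almost ι_K-local map from (C₁,ι₁)⊗(D,ι_D) to (C₂,ι₂)⊗(D,ι_D). Consequently the relation [C] ≤ [D] (existence of an almost ι_K-local map from C to D) is a well-defined partial order on 𝔗^U_K which is translation invariant: [C₁] ≤ [C₂] implies [C₁]+[D] ≤ [C₂]+[D] for every [D]. -/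
/-!
Algebraic model for horizontal almost `ι_K`-complexes (Kang–Park,
"Torsion in the knot concordance group and cabling").

Conventions.  We work over `F₂ = ℤ/2`.  A bigraded chain complex of finitely
generated free `F₂[U]`-modules is presented by a finite homogeneous basis
`idx`, a bidegree function `gr : idx → ℤ × ℤ` (Alexander and Maslov gradings),
and a differential matrix `d` over `F₂[U]` (the `j`-th basis vector is sent to
`∑ i, d i j • eᵢ`; matrix multiplication is composition).  The variable `U`
has bidegree `(−1, −2)` and the differential has bidegree `(0, −1)`.
-/

open Polynomial Matrix Kronecker

noncomputable section

/-! ### Auxiliary lemmas -/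

set_option linter.unusedSectionVars false

namespace KP

section CharTwo
variable {R : Type} [CommRing R] [Module F2 R]

lemma add_self' (a : R) : a + a = 0 := by
  have : a + a = ((1 + 1 : F2)) • a := by rw [add_smul, one_smul]
  rw [this, show (1 + 1 : F2) = 0 by decide, zero_smul]

lemma madd_self {m n : Type} (A : Matrix m n R) : A + A = 0 := by
  ext i j; exact add_self' _

lemma meq_of_add_eq_zero {m n : Type} {A B : Matrix m n R} (h : A + B = 0) : A = B :=
  (eq_neg_of_add_eq_zero_left h).trans (neg_eq_of_add_eq_zero_left (madd_self B))

variable {a b c e : Type} [Fintype a] [Fintype b] [Fintype c] [Fintype e]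
  [DecidableEq a] [DecidableEq b] [DecidableEq e]

/-- Generic chain-homotopy predicate between matrices. -/
def Htp (dD : Matrix b b R) (dC : Matrix a a R) (f g : Matrix b a R) : Prop :=
  ∃ H : Matrix b a R, f + g = dD * H + H * dC

lemma Htp.of_eq {dD : Matrix b b R} {dC : Matrix a a R} {f g : Matrix b a R}
    (h : f = g) : Htp dD dC f g :=
  ⟨0, by subst h; rw [madd_self, Matrix.mul_zero, Matrix.zero_mul, add_zero]⟩

lemma Htp.trans {dD : Matrix b b R} {dC : Matrix a a R} {f g h : Matrix b a R}
    (h1 : Htp dD dC f g) (h2 : Htp dD dC g h) : Htp dD dC f h := by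
  obtain ⟨H1, e1⟩ := h1; obtain ⟨H2, e2⟩ := h2
  refine ⟨H1 + H2, ?_⟩
  have : f + h = (f + g) + (g + h) := by
    have hg := madd_self (R := R) g
    calc f + h = f + (g + g) + h := by rw [hg, add_zero]
    _ = (f + g) + (g + h) := by abel
  rw [this, e1, e2, Matrix.mul_add, Matrix.add_mul]; abel

lemma Htp.add {dD : Matrix b b R} {dC : Matrix a a R} {f g f' g' : Matrix b a R}
    (h1 : Htp dD dC f g) (h2 : Htp dD dC f' g') : Htp dD dC (f + f') (g + g') := by
  obtain ⟨H1, e1⟩ := h1; obtain ⟨H2, e2⟩ := h2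
  refine ⟨H1 + H2, ?_⟩
  have : f + f' + (g + g') = (f + g) + (f' + g') := by abel
  rw [this, e1, e2, Matrix.mul_add, Matrix.add_mul]; abel

lemma Htp.compLeft {dD : Matrix b b R} {dC : Matrix a a R} {dE : Matrix c c R}
    {f g : Matrix b a R} (p : Matrix c b R) (hp : p * dD = dE * p)
    (h : Htp dD dC f g) : Htp dE dC (p * f) (p * g) := by
  obtain ⟨H, e⟩ := h
  exact ⟨p * H, by rw [← Matrix.mul_add, e, Matrix.mul_add, ← Matrix.mul_assoc, hp,
    Matrix.mul_assoc, Matrix.mul_assoc]⟩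

lemma Htp.compRight {dD : Matrix b b R} {dC : Matrix a a R} {dE : Matrix c c R}
    {f g : Matrix b a R} (q : Matrix a c R) (hq : dC * q = q * dE)
    (h : Htp dD dC f g) : Htp dD dE (f * q) (g * q) := by
  obtain ⟨H, e⟩ := h
  exact ⟨H * q, by rw [← Matrix.add_mul, e, Matrix.add_mul, Matrix.mul_assoc dD,
    Matrix.mul_assoc H dC q, hq, ← Matrix.mul_assoc H q dE]⟩

lemma Htp.kron {dD : Matrix b b R} {dC : Matrix a a R} {dE : Matrix e e R}
    {f g : Matrix b a R} (m : Matrix e e R) (hm : m * dE = dE * m)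
    (h : Htp dD dC f g) :
    Htp (dD ⊗ₖ (1 : Matrix e e R) + (1 : Matrix b b R) ⊗ₖ dE)
        (dC ⊗ₖ (1 : Matrix e e R) + (1 : Matrix a a R) ⊗ₖ dE)
        (f ⊗ₖ m) (g ⊗ₖ m) := by
  obtain ⟨H, eH⟩ := h
  refine ⟨H ⊗ₖ m, ?_⟩
  have key : (dD ⊗ₖ (1 : Matrix e e R) + (1 : Matrix b b R) ⊗ₖ dE) * (H ⊗ₖ m)
      + (H ⊗ₖ m) * (dC ⊗ₖ (1 : Matrix e e R) + (1 : Matrix a a R) ⊗ₖ dE)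
      = (dD * H) ⊗ₖ m + (H * dC) ⊗ₖ m
        + (H ⊗ₖ (dE * m) + H ⊗ₖ (m * dE)) := by
    rw [Matrix.add_mul, Matrix.mul_add, ← Matrix.mul_kronecker_mul,
      ← Matrix.mul_kronecker_mul, ← Matrix.mul_kronecker_mul, ← Matrix.mul_kronecker_mul,
      Matrix.one_mul, Matrix.mul_one, Matrix.one_mul, Matrix.mul_one]
    abel
  rw [key, hm, madd_self, add_zero, ← Matrix.add_kronecker, ← Matrix.add_kronecker, eH]

end CharTwo

section Hat

lemma hatM_eq {m n : Type} (f : Matrix m n PolyU) :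
    hatM f = f.map ⇑(Polynomial.constantCoeff (R := F2)) := rfl

lemma hatM_mul {m n p : Type} [Fintype n] (A : Matrix m n PolyU) (B : Matrix n p PolyU) :
    hatM (A * B) = hatM A * hatM B := by
  rw [hatM_eq, hatM_eq, hatM_eq, Matrix.map_mul]

lemma hatM_add {m n : Type} (A B : Matrix m n PolyU) :
    hatM (A + B) = hatM A + hatM B := by
  ext i j; simp [hatM, Polynomial.coeff_add]

lemma hatM_one {n : Type} [Fintype n] [DecidableEq n] :
    hatM (1 : Matrix n n PolyU) = 1 := by
  rw [hatM_eq]; exact Matrix.map_one _ (map_zero _) (map_one _)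

lemma hatM_kron {m n p q : Type} (A : Matrix m n PolyU) (B : Matrix p q PolyU) :
    hatM (A ⊗ₖ B) = hatM A ⊗ₖ hatM B := by
  ext ⟨i, k⟩ ⟨j, l⟩
  simp [hatM, Matrix.kroneckerMap_apply, Polynomial.mul_coeff_zero]

lemma mapRH_kron {m n p q : Type} {S : Type} [CommSemiring S] (φ : PolyU →+* S)
    (A : Matrix m n PolyU) (B : Matrix p q PolyU) :
    (A ⊗ₖ B).map ⇑φ = (A.map ⇑φ) ⊗ₖ (B.map ⇑φ) := by
  ext ⟨i, k⟩ ⟨j, l⟩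
  simp [Matrix.kroneckerMap_apply, Matrix.map_apply]

end Hat

section Deriv

lemma derivM_mul {m n p : Type} [Fintype n] (A : Matrix m n PolyU) (B : Matrix n p PolyU) :
    (A * B).map ⇑(Polynomial.derivative (R := F2))
      = A.map ⇑Polynomial.derivative * B + A * B.map ⇑Polynomial.derivative := by
  ext i j
  simp [Matrix.mul_apply, Matrix.map_apply, Polynomial.derivative_mul,
    Finset.sum_add_distrib]

lemma Phi_eq (C : CxData) : C.Phi = C.d.map ⇑(Polynomial.derivative (R := F2)) := rfl

lemma phi_anticomm {C : CxData} (h : C.IsComplex) :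
    C.Phi * C.d + C.d * C.Phi = 0 := by
  have := congrArg (fun M : Matrix C.idx C.idx PolyU =>
    M.map ⇑(Polynomial.derivative (R := F2))) h.1
  simp only [derivM_mul] at this
  rw [← Phi_eq] at this
  simpa using this

lemma phiHat_d {C : CxData} (h : C.IsComplex) :
    C.PhiHat * C.dHat = C.dHat * C.PhiHat := by
  have h0 := phi_anticomm h
  have := congrArg hatM h0
  rw [hatM_add, hatM_mul, hatM_mul] at this
  simp only [show hatM (0 : Matrix C.idx C.idx PolyU) = 0 by ext i j; simp [hatM]] at this
  exact meq_of_add_eq_zero this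

lemma phiHat_nat {C D : CxData} {f : Matrix D.idx C.idx PolyU} (hc : f * C.d = D.d * f) :
    Htp D.dHat C.dHat (D.PhiHat * hatM f) (hatM f * C.PhiHat) := by
  refine ⟨hatM (f.map ⇑(Polynomial.derivative (R := F2))), ?_⟩
  have h0 := congrArg (fun M : Matrix D.idx C.idx PolyU =>
    M.map ⇑(Polynomial.derivative (R := F2))) hc
  simp only [derivM_mul] at h0
  rw [← Phi_eq, ← Phi_eq] at h0
  have h1 := congrArg hatM h0
  rw [hatM_add, hatM_add, hatM_mul, hatM_mul, hatM_mul, hatM_mul] at h1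
  simp only [CxData.dHat, CxData.PhiHat]
  apply meq_of_add_eq_zero
  calc hatM D.Phi * hatM f + hatM f * hatM C.Phi
        + (hatM D.d * hatM (f.map ⇑Polynomial.derivative)
          + hatM (f.map ⇑Polynomial.derivative) * hatM C.d)
      = (hatM (f.map ⇑Polynomial.derivative) * hatM C.d + hatM f * hatM C.Phi)
        + (hatM D.Phi * hatM f + hatM D.d * hatM (f.map ⇑Polynomial.derivative)) := by abel
    _ = (hatM D.Phi * hatM f + hatM D.d * hatM (f.map ⇑Polynomial.derivative))
        + (hatM D.Phi * hatM f + hatM D.d * hatM (f.map ⇑Polynomial.derivative)) := by rw [h1]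
    _ = 0 := madd_self _

end Deriv

section Tensor

lemma tensor_d (C D : CxData) :
    (tensorCx C D).d = C.d ⊗ₖ (1 : Matrix D.idx D.idx PolyU)
      + (1 : Matrix C.idx C.idx PolyU) ⊗ₖ D.d := rfl

lemma tensor_dHat (C D : CxData) :
    (tensorCx C D).dHat = C.dHat ⊗ₖ (1 : Matrix D.idx D.idx F2)
      + (1 : Matrix C.idx C.idx F2) ⊗ₖ D.dHat := by
  show hatM _ = _
  erw [tensor_d, hatM_add, hatM_kron, hatM_kron, hatM_one, hatM_one]
  rfl

lemma mapL_add {m n : Type} (A B : Matrix m n PolyU) :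
    (A + B).map ⇑toL = A.map ⇑toL + B.map ⇑toL := by
  ext i j; simp [Matrix.map_apply]

lemma mapL_mul {m n p : Type} [Fintype n] (A : Matrix m n PolyU) (B : Matrix n p PolyU) :
    (A * B).map ⇑toL = A.map ⇑toL * B.map ⇑toL := Matrix.map_mul

lemma mapL_one {n : Type} [Fintype n] [DecidableEq n] :
    (1 : Matrix n n PolyU).map ⇑toL = 1 :=
  Matrix.map_one _ (map_zero _) (map_one _)

lemma tensor_dL (C D : CxData) :
    (tensorCx C D).dL = C.dL ⊗ₖ (1 : Matrix D.idx D.idx Laur)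
      + (1 : Matrix C.idx C.idx Laur) ⊗ₖ D.dL := by
  show ((tensorCx C D).d).map ⇑toL = _
  erw [tensor_d, mapL_add, mapRH_kron, mapRH_kron, mapL_one, mapL_one]
  rfl

lemma tensorHor_dL (X Y : Hor) :
    (tensorHor X Y).C.dL = X.C.dL ⊗ₖ (1 : Matrix Y.C.idx Y.C.idx Laur)
      + (1 : Matrix X.C.idx X.C.idx Laur) ⊗ₖ Y.C.dL := tensor_dL X.C Y.C

lemma tensorHor_dHat (X Y : Hor) :
    (tensorHor X Y).C.dHat = X.C.dHat ⊗ₖ (1 : Matrix Y.C.idx Y.C.idx F2)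
      + (1 : Matrix X.C.idx X.C.idx F2) ⊗ₖ Y.C.dHat := tensor_dHat X.C Y.C

lemma tensorHor_iota (X Y : Hor) :
    (tensorHor X Y).iota = X.iota ⊗ₖ Y.iota
      + (X.C.PhiHat * X.iota) ⊗ₖ (Y.iota * Y.C.PhiHat) := rfl

end Tensor

section Graded

lemma grad_one {C : CxData} : GradedMap C C (0, 0) (1 : Matrix C.idx C.idx PolyU) := by
  intro i j k hk
  rcases eq_or_ne i j with rfl | hij
  · rw [Matrix.one_apply_eq, Polynomial.coeff_one] at hk
    have hk0 : k = 0 := by by_contra h; simp [h] at hk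
    subst hk0; simp
  · rw [Matrix.one_apply_ne hij] at hk; simp at hk

lemma grad_comp {A B C : CxData} {f : Matrix B.idx A.idx PolyU} {g : Matrix C.idx B.idx PolyU}
    (hf : GradedMap A B (0, 0) f) (hg : GradedMap B C (0, 0) g) :
    GradedMap A C (0, 0) (g * f) := by
  intro i j k hk
  rw [Matrix.mul_apply, Polynomial.finset_sum_coeff] at hk
  obtain ⟨m, -, hm⟩ := Finset.exists_ne_zero_of_sum_ne_zero hk
  rw [Polynomial.coeff_mul] at hm
  obtain ⟨p, hp, hpv⟩ := Finset.exists_ne_zero_of_sum_ne_zero hm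
  have h1 : (g i m).coeff p.1 ≠ 0 := fun h => hpv (by rw [h, zero_mul])
  have h2 : (f m j).coeff p.2 ≠ 0 := fun h => hpv (by rw [h, mul_zero])
  have e1 := hg i m p.1 h1
  have e2 := hf m j p.2 h2
  have hpk : p.1 + p.2 = k := Finset.HasAntidiagonal.mem_antidiagonal.mp hp
  rw [Prod.ext_iff] at e1 e2 ⊢
  simp only [Prod.fst_add, Prod.snd_add] at e1 e2 ⊢
  obtain ⟨e1a, e1b⟩ := e1; obtain ⟨e2a, e2b⟩ := e2
  constructor <;> [skip; skip] <;> · rw [← hpk]; push_cast; omega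

lemma grad_kron {C₁ C₂ D : CxData} {f : Matrix C₂.idx C₁.idx PolyU}
    (hf : GradedMap C₁ C₂ (0, 0) f) :
    GradedMap (tensorCx C₁ D) (tensorCx C₂ D) (0, 0)
      (f ⊗ₖ (1 : Matrix D.idx D.idx PolyU)) := by
  rintro ⟨i, u⟩ ⟨j, v⟩ k hk
  rcases eq_or_ne u v with rfl | huv
  · have he : (f ⊗ₖ (1 : Matrix D.idx D.idx PolyU)) (i, u) (j, u) = f i j := by
      simp [Matrix.kroneckerMap_apply, Matrix.one_apply]
    rw [he] at hk
    have e := hf i j k hk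
    show (C₂.gr i + D.gr u) + _ = (C₁.gr j + D.gr u) + _
    rw [Prod.ext_iff] at e ⊢
    simp only [Prod.fst_add, Prod.snd_add] at e ⊢
    obtain ⟨ea, eb⟩ := e
    constructor <;> omega
  · have he : (f ⊗ₖ (1 : Matrix D.idx D.idx PolyU)) (i, u) (j, v) = 0 := by
      simp [Matrix.kroneckerMap_apply, Matrix.one_apply_ne huv]
    rw [he] at hk; simp at hk

end Graded

section Main

lemma hatHtp {C D : CxData} {f g : Matrix D.idx C.idx F2} :
    HatHomotopic C D f g ↔ Htp D.dHat C.dHat f g := Iff.rfl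

lemma lHtp {C D : CxData} {f g : Matrix D.idx C.idx Laur} :
    LHomotopic C D f g ↔ Htp D.dL C.dL f g := Iff.rfl

lemma reflALM (X : Hor) : AlmostLocalMap X X 1 := by
  refine ⟨grad_one, by rw [Matrix.one_mul, Matrix.mul_one],
    ⟨1, by rw [Matrix.one_mul, Matrix.mul_one], ?_, ?_⟩, ?_⟩
  · rw [lHtp, mapL_one, Matrix.mul_one]; exact Htp.of_eq rfl
  · rw [lHtp, mapL_one, Matrix.mul_one]; exact Htp.of_eq rfl
  · rw [hatHtp, hatM_one, Matrix.mul_one, Matrix.one_mul]; exact Htp.of_eq rfl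

lemma compALM {X Y Z : Hor} {f : Matrix Y.C.idx X.C.idx PolyU}
    {g : Matrix Z.C.idx Y.C.idx PolyU}
    (hf : AlmostLocalMap X Y f) (hg : AlmostLocalMap Y Z g) :
    AlmostLocalMap X Z (g * f) := by
  obtain ⟨hfg, hfc, ⟨f', hf'c, hf'1, hf'2⟩, hfi⟩ := hf
  obtain ⟨hgg, hgc, ⟨g', hg'c, hg'1, hg'2⟩, hgi⟩ := hg
  rw [lHtp] at hf'1 hf'2 hg'1 hg'2
  rw [hatHtp] at hfi hgi
  have hfdL : Y.C.dL * f.map ⇑toL = f.map ⇑toL * X.C.dL := by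
    have := congrArg (fun M : Matrix Y.C.idx X.C.idx PolyU => M.map ⇑toL) hfc
    simp only [mapL_mul] at this
    exact this.symm
  have hgdL : g.map ⇑toL * Y.C.dL = Z.C.dL * g.map ⇑toL := by
    have := congrArg (fun M : Matrix Z.C.idx Y.C.idx PolyU => M.map ⇑toL) hgc
    simp only [mapL_mul] at this; exact this
  have hfdH : Y.C.dHat * hatM f = hatM f * X.C.dHat := by
    have := congrArg hatM hfc
    simp only [hatM_mul] at this
    exact this.symm
  have hgdH : hatM g * Y.C.dHat = Z.C.dHat * hatM g := by
    have := congrArg hatM hgc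
    simp only [hatM_mul] at this; exact this
  refine ⟨grad_comp hfg hgg, ?_, ⟨f' * g', ?_, ?_, ?_⟩, ?_⟩
  · rw [Matrix.mul_assoc, hfc, ← Matrix.mul_assoc, hgc, Matrix.mul_assoc]
  · rw [Matrix.mul_assoc, hg'c, ← Matrix.mul_assoc, hf'c, Matrix.mul_assoc]
  · rw [lHtp, mapL_mul]
    have e : f' * g' * (g.map ⇑toL * f.map ⇑toL)
        = f' * (g' * g.map ⇑toL) * f.map ⇑toL := by
      simp only [Matrix.mul_assoc]
    refine (Htp.of_eq e).trans ?_
    refine ((hg'1.compLeft f' hf'c).compRight (f.map ⇑toL) hfdL).trans ?_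
    exact (Htp.of_eq (by rw [Matrix.mul_one])).trans hf'1
  · rw [lHtp, mapL_mul]
    have e : g.map ⇑toL * f.map ⇑toL * (f' * g')
        = g.map ⇑toL * (f.map ⇑toL * f') * g' := by
      simp only [Matrix.mul_assoc]
    refine (Htp.of_eq e).trans ?_
    refine ((hf'2.compLeft (g.map ⇑toL) hgdL).compRight g' hg'c.symm).trans ?_
    exact (Htp.of_eq (by rw [Matrix.mul_one])).trans hg'2
  · rw [hatHtp, hatM_mul]
    have e : Z.iota * (hatM g * hatM f) = Z.iota * hatM g * hatM f := by
      rw [Matrix.mul_assoc]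
    refine (Htp.of_eq e).trans ?_
    refine (hgi.compRight (hatM f) hfdH.symm.symm).trans ?_
    have e2 : hatM g * Y.iota * hatM f = hatM g * (Y.iota * hatM f) := by
      rw [Matrix.mul_assoc]
    refine (Htp.of_eq e2).trans ?_
    refine (hfi.compLeft (hatM g) hgdH).trans ?_
    exact Htp.of_eq (by rw [Matrix.mul_assoc])

lemma leComp {X Y Z : Hor} (h1 : Le X Y) (h2 : Le Y Z) : Le X Z := by
  obtain ⟨f, hf⟩ := h1; obtain ⟨g, hg⟩ := h2
  exact ⟨g * f, compALM hf hg⟩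

lemma tensorALM {X₁ X₂ D : Hor} (h1 : IsHorizontal X₁) (h2 : IsHorizontal X₂)
    (hD : IsHorizontal D) {f : Matrix X₂.C.idx X₁.C.idx PolyU}
    (hf : AlmostLocalMap X₁ X₂ f) :
    AlmostLocalMap (tensorHor X₁ D) (tensorHor X₂ D)
      (f ⊗ₖ (1 : Matrix D.C.idx D.C.idx PolyU)) := by
  obtain ⟨hfg, hfc, ⟨f', hf'c, hf'1, hf'2⟩, hfi⟩ := hf
  rw [lHtp] at hf'1 hf'2
  rw [hatHtp] at hfi
  have hι₁d : X₁.iota * X₁.C.dHat = X₁.C.dHat * X₁.iota := h1.2.2.1.1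
  have hι₂d : X₂.iota * X₂.C.dHat = X₂.C.dHat * X₂.iota := h2.2.2.1.1
  have hιDd : D.iota * D.C.dHat = D.C.dHat * D.iota := hD.2.2.1.1
  have hP₂d := phiHat_d h2.1
  have hPDd := phiHat_d hD.1
  have hPf := phiHat_nat hfc
  refine ⟨grad_kron hfg, ?_, ?_, ?_⟩
  · have key : (f ⊗ₖ (1 : Matrix D.C.idx D.C.idx PolyU)) * (X₁.C.d ⊗ₖ (1 : Matrix D.C.idx D.C.idx PolyU)
        + (1 : Matrix X₁.C.idx X₁.C.idx PolyU) ⊗ₖ D.C.d)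
      = (X₂.C.d ⊗ₖ (1 : Matrix D.C.idx D.C.idx PolyU)
        + (1 : Matrix X₂.C.idx X₂.C.idx PolyU) ⊗ₖ D.C.d) * (f ⊗ₖ (1 : Matrix D.C.idx D.C.idx PolyU)) := by
      rw [Matrix.mul_add, Matrix.add_mul, ← Matrix.mul_kronecker_mul,
        ← Matrix.mul_kronecker_mul, ← Matrix.mul_kronecker_mul, ← Matrix.mul_kronecker_mul]
      simp only [Matrix.one_mul, Matrix.mul_one]
      rw [hfc]
    exact key
  · refine ⟨f' ⊗ₖ (1 : Matrix D.C.idx D.C.idx Laur), ?_, ?_, ?_⟩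
    · rw [tensorHor_dL, tensorHor_dL]
      have key : (f' ⊗ₖ (1 : Matrix D.C.idx D.C.idx Laur))
          * (X₂.C.dL ⊗ₖ (1 : Matrix D.C.idx D.C.idx Laur)
            + (1 : Matrix X₂.C.idx X₂.C.idx Laur) ⊗ₖ D.C.dL)
        = (X₁.C.dL ⊗ₖ (1 : Matrix D.C.idx D.C.idx Laur)
            + (1 : Matrix X₁.C.idx X₁.C.idx Laur) ⊗ₖ D.C.dL) * (f' ⊗ₖ (1 : Matrix D.C.idx D.C.idx Laur)) := by
        rw [Matrix.mul_add, Matrix.add_mul,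
          ← Matrix.mul_kronecker_mul, ← Matrix.mul_kronecker_mul,
          ← Matrix.mul_kronecker_mul, ← Matrix.mul_kronecker_mul]
        simp only [Matrix.one_mul, Matrix.mul_one]
        rw [hf'c]
      exact key
    · rw [lHtp]
      have emap : ((f ⊗ₖ (1 : Matrix D.C.idx D.C.idx PolyU)).map ⇑toL)
          = f.map ⇑toL ⊗ₖ (1 : Matrix D.C.idx D.C.idx Laur) := by
        rw [mapRH_kron, mapL_one]
      erw [emap, ← Matrix.mul_kronecker_mul, Matrix.mul_one, tensorHor_dL]
      have h1l := hf'1.kron (1 : Matrix D.C.idx D.C.idx Laur)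
        (by rw [Matrix.one_mul, Matrix.mul_one]) (dE := D.C.dL)
      rw [Matrix.one_kronecker_one] at h1l
      exact h1l
    · rw [lHtp]
      have emap : ((f ⊗ₖ (1 : Matrix D.C.idx D.C.idx PolyU)).map ⇑toL)
          = f.map ⇑toL ⊗ₖ (1 : Matrix D.C.idx D.C.idx Laur) := by
        rw [mapRH_kron, mapL_one]
      erw [emap, ← Matrix.mul_kronecker_mul, Matrix.mul_one, tensorHor_dL]
      have h1l := hf'2.kron (1 : Matrix D.C.idx D.C.idx Laur)
        (by rw [Matrix.one_mul, Matrix.mul_one]) (dE := D.C.dL)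
      rw [Matrix.one_kronecker_one] at h1l
      exact h1l
  · rw [hatHtp, tensorHor_dHat, tensorHor_dHat, tensorHor_iota, tensorHor_iota]
    have ehat : hatM (f ⊗ₖ (1 : Matrix D.C.idx D.C.idx PolyU))
        = hatM f ⊗ₖ (1 : Matrix D.C.idx D.C.idx F2) := by
      rw [hatM_kron, hatM_one]
    erw [ehat]
    have ea : (X₂.iota ⊗ₖ D.iota + (X₂.C.PhiHat * X₂.iota) ⊗ₖ (D.iota * D.C.PhiHat))
        * (hatM f ⊗ₖ (1 : Matrix D.C.idx D.C.idx F2))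
        = (X₂.iota * hatM f) ⊗ₖ D.iota
          + (X₂.C.PhiHat * X₂.iota * hatM f) ⊗ₖ (D.iota * D.C.PhiHat) := by
      rw [Matrix.add_mul, ← Matrix.mul_kronecker_mul, ← Matrix.mul_kronecker_mul]
      simp only [Matrix.mul_one]
    have eb : (hatM f ⊗ₖ (1 : Matrix D.C.idx D.C.idx F2))
        * (X₁.iota ⊗ₖ D.iota + (X₁.C.PhiHat * X₁.iota) ⊗ₖ (D.iota * D.C.PhiHat))
        = (hatM f * X₁.iota) ⊗ₖ D.iota
          + (hatM f * (X₁.C.PhiHat * X₁.iota)) ⊗ₖ (D.iota * D.C.PhiHat) := by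
      rw [Matrix.mul_add, ← Matrix.mul_kronecker_mul, ← Matrix.mul_kronecker_mul]
      simp only [Matrix.one_mul]
    erw [ea, eb]
    refine Htp.add (hfi.kron D.iota hιDd) ?_
    have hm : (D.iota * D.C.PhiHat) * D.C.dHat = D.C.dHat * (D.iota * D.C.PhiHat) := by
      rw [Matrix.mul_assoc, hPDd, ← Matrix.mul_assoc, hιDd, Matrix.mul_assoc]
    refine Htp.kron (D.iota * D.C.PhiHat) hm ?_
    -- inner : Htp X₂.dHat X₁.dHat (X₂.PhiHat * X₂.iota * hatM f) (hatM f * (X₁.PhiHat * X₁.iota))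
    have s1 : Htp X₂.C.dHat X₁.C.dHat
        (X₂.C.PhiHat * (X₂.iota * hatM f)) (X₂.C.PhiHat * (hatM f * X₁.iota)) :=
      hfi.compLeft X₂.C.PhiHat hP₂d
    have s2 : Htp X₂.C.dHat X₁.C.dHat
        ((X₂.C.PhiHat * hatM f) * X₁.iota) ((hatM f * X₁.C.PhiHat) * X₁.iota) :=
      hPf.compRight X₁.iota hι₁d.symm
    refine (Htp.of_eq (by simp only [Matrix.mul_assoc])).trans (s1.trans ?_)
    refine (Htp.of_eq (by simp only [Matrix.mul_assoc])).trans (s2.trans ?_)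
    exact Htp.of_eq (by simp only [Matrix.mul_assoc])

end Main

end KP

/-- If `f : (C₁,ι₁) → (C₂,ι₂)` is an almost `ι_K`-local map
and `(D, ι_D)` is any horizontal almost `ι_K`-complex, then `f ⊗ id_D` is an
almost `ι_K`-local map from `(C₁,ι₁) ⊗ (D,ι_D)` to `(C₂,ι₂) ⊗ (D,ι_D)`.
Consequently the relation `[C] ≤ [D]` (existence of an almost `ι_K`-local
map) is a well-defined partial order on `𝔗^U_K` (reflexive, transitive,
compatible with almost `ι_K`-local equivalence) which is translation
invariant. -/
theorem le_translation_invariant_partial_order :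
    (∀ X₁ X₂ D : Hor, IsHorizontal X₁ → IsHorizontal X₂ → IsHorizontal D →
      ∀ f : Matrix X₂.C.idx X₁.C.idx PolyU, AlmostLocalMap X₁ X₂ f →
        AlmostLocalMap (tensorHor X₁ D) (tensorHor X₂ D)
          (f ⊗ₖ (1 : Matrix D.C.idx D.C.idx PolyU))) ∧
    (∀ X : Hor, IsHorizontal X → Le X X) ∧
    (∀ X Y Z : Hor, IsHorizontal X → IsHorizontal Y → IsHorizontal Z →
      Le X Y → Le Y Z → Le X Z) ∧
    (∀ X X' Y Y' : Hor, IsHorizontal X → IsHorizontal X' →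
      IsHorizontal Y → IsHorizontal Y' →
      AlmostLocalEquiv X X' → AlmostLocalEquiv Y Y' → Le X Y → Le X' Y') ∧
    (∀ X Y D : Hor, IsHorizontal X → IsHorizontal Y → IsHorizontal D →
      Le X Y → Le (tensorHor X D) (tensorHor Y D)) := by
  refine ⟨?_, ?_, ?_, ?_, ?_⟩
  · intro X₁ X₂ D h1 h2 hD f hf
    exact KP.tensorALM h1 h2 hD hf
  · intro X _
    exact ⟨1, KP.reflALM X⟩
  · intro X Y Z _ _ _ h1 h2
    exact KP.leComp h1 h2
  · intro X X' Y Y' _ _ _ _ hXX' hYY' hXY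
    exact KP.leComp (KP.leComp hXX'.2 hXY) hYY'.1
  · rintro X Y D hX hY hD ⟨f, hf⟩
    exact ⟨f ⊗ₖ 1, KP.tensorALM hX hY hD hf⟩

end
end

section
/- The classes of C_O and C_E in 𝔗^U_K are incomparable: there is no almost ι_K-local map from C_E to C_O, and there is no almost ι_K-local map from C_O to C_E. -/
/-!
Algebraic model for horizontal almost `ι_K`-complexes (Kang–Park,
"Torsion in the knot concordance group and cabling").

Conventions.  We work over `F₂ = ℤ/2`.  A bigraded chain complex of finitely
generated free `F₂[U]`-modules is presented by a finite homogeneous basis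
`idx`, a bidegree function `gr : idx → ℤ × ℤ` (Alexander and Maslov gradings),
and a differential matrix `d` over `F₂[U]` (the `j`-th basis vector is sent to
`∑ i, d i j • eᵢ`; matrix multiplication is composition).  The variable `U`
has bidegree `(−1, −2)` and the differential has bidegree `(0, −1)`.
-/

open Polynomial Matrix Kronecker

noncomputable section

lemma dHat_CE : CE.C.dHat = 0 := by
  ext i j
  fin_cases i <;> fin_cases j <;>
    simp [CE, CxData.dHat, hatM, Matrix.vecHead, Matrix.vecTail] <;> rfl

lemma dHat_CO : CO.C.dHat = 0 := by
  ext i j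
  exact Polynomial.coeff_zero 0

lemma dL_CO : CO.C.dL = 0 := by
  ext i j
  simp [CO, CxData.dL]
  rfl

lemma zmod2_cancel : ∀ x y : ZMod 2, x + (x + y) = 0 → y = 0 := by decide

theorem CE_CO_incomparable' : ¬ Le CE CO ∧ ¬ Le CO CE := by
  constructor
  · rintro ⟨f, hgr, hchain, ⟨g, hgd, hgf, hfg⟩, H, hH⟩
    -- grading constraints
    have h1 : f () (1 : Fin 5) = 0 := by
      ext k
      simp only [Polynomial.coeff_zero]
      by_contra hk
      have := hgr () (1 : Fin 5) k hk
      simp [CE, CO, Prod.ext_iff] at this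
      omega
    have h2 : f () (2 : Fin 5) = 0 := by
      ext k
      simp only [Polynomial.coeff_zero]
      by_contra hk
      have := hgr () (2 : Fin 5) k hk
      simp [CE, CO, Prod.ext_iff] at this
      omega
    have h3 : f () (3 : Fin 5) = 0 := by
      ext k
      simp only [Polynomial.coeff_zero]
      by_contra hk
      have := hgr () (3 : Fin 5) k hk
      simp [CE, CO, Prod.ext_iff] at this
      omega
    -- hat condition: coeff 0 of f()4 vanishes
    rw [dHat_CE, dHat_CO, Matrix.zero_mul, Matrix.mul_zero, add_zero] at hH
    have h40 : (f () (4 : Fin 5)).coeff 0 = 0 := by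
      have := congrFun (congrFun hH ()) (0 : Fin 5)
      erw [Matrix.add_apply, Matrix.mul_apply, Matrix.mul_apply, Fin.sum_univ_five, Fintype.sum_subsingleton _ (), Matrix.zero_apply] at this
      simp [CE, CO, hatM, Matrix.add_apply, Matrix.mul_apply, Fin.sum_univ_five] at this
      exact zmod2_cancel _ _ this
    have h4 : f () (4 : Fin 5) = 0 := by
      ext k
      simp only [Polynomial.coeff_zero]
      by_contra hk
      rcases Nat.eq_zero_or_pos k with rfl | hkpos
      · exact hk h40
      · have := hgr () (4 : Fin 5) k hk
        simp [CE, CO, Prod.ext_iff] at this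
        omega
    -- g is a cycle: g 0 () = 0
    rw [dL_CO, Matrix.mul_zero] at hgd
    have hg0 : g (0 : Fin 5) () = 0 := by
      have := congrFun (congrFun hgd.symm (1 : Fin 5)) ()
      erw [Matrix.mul_apply, Fin.sum_univ_five, Matrix.zero_apply] at this
      simp [CE, CxData.dL, Matrix.mul_apply, Fin.sum_univ_five, toL] at this
      exact this.resolve_right (LaurentPolynomial.isUnit_T 1).ne_zero
    -- f g = 1 gives 1 = 0
    obtain ⟨K, hK⟩ := hfg
    rw [dL_CO, Matrix.zero_mul, Matrix.mul_zero, add_zero] at hK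
    have := congrFun (congrFun hK ()) ()
    have t5 : ∑ x : Fin 5, Polynomial.toLaurent (f () x) * g x () + 1 = 0 := this
    simp [Fin.sum_univ_five, h1, h2, h3, h4, hg0] at t5
  · rintro ⟨f, hgr, hchain, ⟨g, hgd, hgf, hfg⟩, H, hH⟩
    have h1 : f (1 : Fin 5) () = 0 := by
      ext k
      simp only [Polynomial.coeff_zero]
      by_contra hk
      have := hgr (1 : Fin 5) () k hk
      simp [CE, CO, Prod.ext_iff] at this
      omega
    have h2 : f (2 : Fin 5) () = 0 := by
      ext k
      simp only [Polynomial.coeff_zero]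
      by_contra hk
      have := hgr (2 : Fin 5) () k hk
      simp [CE, CO, Prod.ext_iff] at this
      omega
    have h3 : f (3 : Fin 5) () = 0 := by
      ext k
      simp only [Polynomial.coeff_zero]
      by_contra hk
      have := hgr (3 : Fin 5) () k hk
      simp [CE, CO, Prod.ext_iff] at this
      omega
    -- chain map: f (0 : Fin 5) () = 0
    have h0 : f (0 : Fin 5) () = 0 := by
      have := congrFun (congrFun hchain (1 : Fin 5)) ()
      erw [Matrix.mul_apply, Matrix.mul_apply, Fin.sum_univ_five, Fintype.sum_subsingleton _ ()] at this
      simp [CE, CO, Matrix.mul_apply, Fin.sum_univ_five] at this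
      exact this
    -- hat: coeff 0 of f 4 vanishes
    rw [dHat_CE, dHat_CO, Matrix.zero_mul, Matrix.mul_zero, add_zero] at hH
    have h40 : (f (4 : Fin 5) ()).coeff 0 = 0 := by
      have := congrFun (congrFun hH (3 : Fin 5)) ()
      erw [Matrix.add_apply, Matrix.mul_apply, Matrix.mul_apply, Matrix.zero_apply] at this
      have t5 : (∑ x : Fin 5, CE.iota (3:Fin 5) x * hatM f x ()) +
          (∑ x : Unit, hatM f (3:Fin 5) x * CO.iota x ()) = 0 := this
      simpa [CE, CO, hatM, Fin.sum_univ_five, h3] using t5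
    have h4 : f (4 : Fin 5) () = 0 := by
      ext k
      simp only [Polynomial.coeff_zero]
      by_contra hk
      rcases Nat.eq_zero_or_pos k with rfl | hkpos
      · exact hk h40
      · have := hgr (4 : Fin 5) () k hk
        simp [CE, CO, Prod.ext_iff] at this
        omega
    obtain ⟨K, hK⟩ := hgf
    rw [dL_CO, Matrix.zero_mul, Matrix.mul_zero, add_zero] at hK
    have := congrFun (congrFun hK ()) ()
    have t5 : ∑ x : Fin 5, g () x * Polynomial.toLaurent (f x ()) + 1 = 0 := this
    simp [Fin.sum_univ_five, h0, h1, h2, h3, h4] at t5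

/-- The classes of `C_O` and `C_E` in `𝔗^U_K` are
incomparable: there is no almost `ι_K`-local map from `C_E` to `C_O`, and
there is no almost `ι_K`-local map from `C_O` to `C_E`. -/
theorem CE_CO_incomparable : ¬ Le CE CO ∧ ¬ Le CO CE := CE_CO_incomparable'

end
end
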